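/- arXiv:2304.00607 — 2 statements merged into one kernel-verified Lean document; each statement's English description precedes it below -/
import Mathlib

section
/- Fix (ε,d) ∈ {(1,1),(−1,0),(1,0)} and r ≥ r₁. Let ([v₀],[v₁],[v₂],[v₃]) ∈ P_r^{{4}}, and let λ, μ, e′, f′ be as follows: Π = ω(v₀,v₁)·ω(v₁,v₂)·ω(v₂,v₀) with a fixed square root √Π, λ = √Π/ω(v₁,v₀), μ = λ⁻¹·ω(v₃,v₂), and e′, f′ are the unique vectors in ⟨v₀,v₁⟩^⊥ ∩ ⟨v₀,v₁,v₂,v₃⟩ with ω(e′,v₂) = λ, ω(e′,v₃) = μ·φ₋(CR₁,CR₂), ω(f′,v₂) = −λ, ω(f′,v₃) = ε·μ·φ₊(CR₁,CR₂) (cross-ratios of ([v₀],[v₁],[v₂],[v₃])). If v₄ ∈ V_r is a nonzero isotropic vector such that p = ([v₀],[v₁],[v₂],[v₃],[v₄]) ∈ P_r^{(5)}, then ω(e′,v₄) = ε·(ω(v₂,v₄)/λ)·ψ₋(p)/Δ^{1/2}(α₁(p),α₂(p)) and ω(f′,v₄) = (ω(v₂,v₄)/λ)·ψ₊(p)/Δ^{1/2}(α₁(p),α₂(p)),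 where ψ_η(p) = η·φ_η(α₁(p),α₂(p))·Γ(β₁(p),β₂(p)) + (α₂(p)·β₁(p)/γ₁(p))·Γ(γ₁(p),γ₂(p)) for η ∈ {+1,−1}. -/
noncomputable section

open scoped Classical

namespace DCM

/-- `Vc r d` is `ℂ^(2r+d)`, with coordinates taken in the ordered basis
`e_r, …, e_1, (h), f_1, …, f_r` (the middle vector `h` being present only if `d = 1`). -/
abbrev Vc (r d : ℕ) := Fin (2 * r + d) → ℂ

/-- `e_i` for `1 ≤ i ≤ r`: the standard basis vector at position `r - i`. -/
def eV (r d i : ℕ) : Vc r d := fun k => if (k : ℕ) = r - i then 1 else 0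

/-- `h`: the standard basis vector at position `r` (relevant only when `d = 1`). -/
def hV (r d : ℕ) : Vc r d := fun k => if (k : ℕ) = r then 1 else 0

/-- `f_i` for `1 ≤ i ≤ r`: the standard basis vector at position `r + d + i - 1`. -/
def fV (r d i : ℕ) : Vc r d := fun k => if (k : ℕ) = r + d + i - 1 then 1 else 0

/-- The ε-symmetric bilinear form ω on `Vc r d`, determined by `ω(e_i,f_j) = δ_ij`,
`ω(f_i,e_j) = ε·δ_ij`, `ω(e_i,e_j) = ω(f_i,f_j) = 0`, and (when `d = 1`)
`ω(h,h) = 1` and `h` orthogonal to all `e_i`, `f_i`. -/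
def om (ε : ℂ) (r d : ℕ) (v w : Vc r d) : ℂ :=
  (∑ j : Fin r,
    (v ⟨r - 1 - (j : ℕ), by have := j.isLt; omega⟩ *
        w ⟨r + d + (j : ℕ), by have := j.isLt; omega⟩ +
      ε * v ⟨r + d + (j : ℕ), by have := j.isLt; omega⟩ *
        w ⟨r - 1 - (j : ℕ), by have := j.isLt; omega⟩)) +
  (if hd : d = 1 then v ⟨r, by omega⟩ * w ⟨r, by omega⟩ else 0)

/-- `v` is a nonzero isotropic vector, i.e. it represents a line `[v] ∈ P_r`. -/
def IsoV (ε : ℂ) (r d : ℕ) (v : Vc r d) : Prop := v ≠ 0 ∧ om ε r d v v = 0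

/-- `g` lies in `G_r`, the group of linear automorphisms preserving ω. -/
def InG (ε : ℂ) (r d : ℕ) (g : Vc r d ≃ₗ[ℂ] Vc r d) : Prop :=
  ∀ v w, om ε r d (g v) (g w) = om ε r d v w

/-- The ω-cross-ratio `CR₀`. -/
def CR0 (ε : ℂ) (r d : ℕ) (v0 v1 v2 v3 : Vc r d) : ℂ :=
  (om ε r d v0 v2 * om ε r d v1 v3) / (om ε r d v0 v3 * om ε r d v1 v2)

/-- The ω-cross-ratio `CR₁`. -/
def CR1 (ε : ℂ) (r d : ℕ) (v0 v1 v2 v3 : Vc r d) : ℂ := (CR0 ε r d v1 v2 v0 v3)⁻¹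

/-- The ω-cross-ratio `CR₂`. -/
def CR2 (ε : ℂ) (r d : ℕ) (v0 v1 v2 v3 : Vc r d) : ℂ := CR0 ε r d v2 v0 v1 v3

/-- `(v0,v1,v2,v3)` represents a tuple of lines in `P_r^{(4)}`:
all lines isotropic and pairwise non-orthogonal. -/
def Conf4 (ε : ℂ) (r d : ℕ) (v0 v1 v2 v3 : Vc r d) : Prop :=
  IsoV ε r d v0 ∧ IsoV ε r d v1 ∧ IsoV ε r d v2 ∧ IsoV ε r d v3 ∧
  om ε r d v0 v1 ≠ 0 ∧ om ε r d v0 v2 ≠ 0 ∧ om ε r d v0 v3 ≠ 0 ∧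
  om ε r d v1 v2 ≠ 0 ∧ om ε r d v1 v3 ≠ 0 ∧ om ε r d v2 v3 ≠ 0

/-- `(v0,…,v4)` represents a tuple of lines in `P_r^{(5)}`. -/
def Conf5 (ε : ℂ) (r d : ℕ) (v0 v1 v2 v3 v4 : Vc r d) : Prop :=
  Conf4 ε r d v0 v1 v2 v3 ∧ IsoV ε r d v4 ∧
  om ε r d v0 v4 ≠ 0 ∧ om ε r d v1 v4 ≠ 0 ∧ om ε r d v2 v4 ≠ 0 ∧ om ε r d v3 v4 ≠ 0

/-- ω restricted to the span of `s` is nondegenerate. -/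
def NondegOn (ε : ℂ) (r d : ℕ) (s : Set (Vc r d)) : Prop :=
  ∀ x ∈ Submodule.span ℂ s, (∀ y ∈ Submodule.span ℂ s, om ε r d x y = 0) → x = 0

/-- `(v0,v1,v2,v3)` represents a tuple of lines in `P_r^{{4}}`: pairwise non-orthogonal
isotropic lines, linearly independent, spanning a nondegenerate subspace. -/
def Gen4 (ε : ℂ) (r d : ℕ) (v0 v1 v2 v3 : Vc r d) : Prop :=
  Conf4 ε r d v0 v1 v2 v3 ∧ LinearIndependent ℂ ![v0, v1, v2, v3] ∧
  NondegOn ε r d {v0, v1, v2, v3}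

/-- `(v0,…,v4)` represents a tuple of lines in `P_r^{{5}}`: every 4-element subtuple
(in the induced order) lies in `P_r^{{4}}`. -/
def Gen5 (ε : ℂ) (r d : ℕ) (v0 v1 v2 v3 v4 : Vc r d) : Prop :=
  Conf5 ε r d v0 v1 v2 v3 v4 ∧
  Gen4 ε r d v0 v1 v2 v3 ∧ Gen4 ε r d v0 v1 v2 v4 ∧ Gen4 ε r d v0 v1 v3 v4 ∧
  Gen4 ε r d v0 v2 v3 v4 ∧ Gen4 ε r d v1 v2 v3 v4

/-- `Γ(z₁,z₂) = 1 - z₁ - z₂`. -/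
def Gam (z1 z2 : ℂ) : ℂ := 1 - z1 - z2

/-- `Δ(z₁,z₂) = Γ(z₁,z₂)² - 2(1+ε)·z₁z₂`. -/
def Del (ε z1 z2 : ℂ) : ℂ := Gam z1 z2 ^ 2 - 2 * (1 + ε) * z1 * z2

/-- `Δ^{1/2}`, relative to a fixed choice `sq` of complex square root:
`Γ` if `ε = -1`, and `sq ∘ Δ` otherwise. -/
def DelHalf (ε : ℂ) (sq : ℂ → ℂ) (z1 z2 : ℂ) : ℂ :=
  if ε = -1 then Gam z1 z2 else sq (Del ε z1 z2)

/-- `φ₊ = (Δ^{1/2} + Γ)/2`. -/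
def phiP (ε : ℂ) (sq : ℂ → ℂ) (z1 z2 : ℂ) : ℂ := (DelHalf ε sq z1 z2 + Gam z1 z2) / 2

/-- `φ₋ = (Δ^{1/2} - Γ)/2`. -/
def phiM (ε : ℂ) (sq : ℂ → ℂ) (z1 z2 : ℂ) : ℂ := (DelHalf ε sq z1 z2 - Gam z1 z2) / 2


private lemma om_add_left (ε : ℂ) (r d : ℕ) (u v w : Vc r d) :
    om ε r d (u + v) w = om ε r d u w + om ε r d v w := by
  unfold om
  rw [add_add_add_comm, ← Finset.sum_add_distrib]
  congr 1
  · exact Finset.sum_congr rfl fun x _ => by simp [Pi.add_apply]; ring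
  · rcases eq_or_ne d 1 with h|h <;> simp [h] <;> ring

private lemma om_add_right (ε : ℂ) (r d : ℕ) (u v w : Vc r d) :
    om ε r d u (v + w) = om ε r d u v + om ε r d u w := by
  unfold om
  rw [add_add_add_comm, ← Finset.sum_add_distrib]
  congr 1
  · exact Finset.sum_congr rfl fun x _ => by simp [Pi.add_apply]; ring
  · rcases eq_or_ne d 1 with h|h <;> simp [h] <;> ring

private lemma om_smul_left (ε : ℂ) (r d : ℕ) (a : ℂ) (v w : Vc r d) :
    om ε r d (a • v) w = a * om ε r d v w := by
  unfold om
  rw [mul_add, Finset.mul_sum]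
  congr 1
  · exact Finset.sum_congr rfl fun x _ => by simp [Pi.smul_apply, smul_eq_mul]; ring
  · rcases eq_or_ne d 1 with h|h <;> simp [h, Pi.smul_apply, smul_eq_mul] <;> ring

private lemma om_smul_right (ε : ℂ) (r d : ℕ) (a : ℂ) (v w : Vc r d) :
    om ε r d v (a • w) = a * om ε r d v w := by
  unfold om
  rw [mul_add, Finset.mul_sum]
  congr 1
  · exact Finset.sum_congr rfl fun x _ => by simp [Pi.smul_apply, smul_eq_mul]; ring
  · rcases eq_or_ne d 1 with h|h <;> simp [h, Pi.smul_apply, smul_eq_mul] <;> ring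

private lemma om_swap (ε : ℂ) (r d : ℕ)
    (hεd : (ε = 1 ∧ d = 1) ∨ (ε = -1 ∧ d = 0) ∨ (ε = 1 ∧ d = 0))
    (v w : Vc r d) : om ε r d v w = ε * om ε r d w v := by
  unfold om
  rcases hεd with ⟨hε, hd⟩|⟨hε, hd⟩|⟨hε, hd⟩ <;> subst hε <;> subst hd <;>
    rw [mul_add, Finset.mul_sum] <;> congr 1 <;>
      first
        | exact Finset.sum_congr rfl fun x _ => by ring
        | (simp; try ring)

private lemma mem_span_quad {r d : ℕ} {x a b c dd : Vc r d}
    (h : x ∈ Submodule.span ℂ ({a, b, c, dd} : Set (Vc r d))) :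
    ∃ x0 x1 x2 x3 : ℂ, x = x0 • a + (x1 • b + (x2 • c + x3 • dd)) := by
  rw [Submodule.mem_span_insert] at h
  obtain ⟨x0, z1, hz1, rfl⟩ := h
  rw [Submodule.mem_span_insert] at hz1
  obtain ⟨x1, z2, hz2, rfl⟩ := hz1
  rw [Submodule.mem_span_insert] at hz2
  obtain ⟨x2, z3, hz3, rfl⟩ := hz2
  rw [Submodule.mem_span_singleton] at hz3
  obtain ⟨x3, rfl⟩ := hz3
  exact ⟨x0, x1, x2, x3, rfl⟩

private lemma main_alg_e (e g01 g02 g03 g12 g13 g23 w0 w1 w2 w3 lam mu D a1 a2 b1 b2 c1 c2 T3 PS S k0 k1 k2 k3 : ℂ)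
    (he : e = 1 ∨ e = -1)
    (hg01 : g01 ≠ 0) (hg02 : g02 ≠ 0) (hg03 : g03 ≠ 0)
    (hg12 : g12 ≠ 0) (hg13 : g13 ≠ 0) (hg23 : g23 ≠ 0)
    (hw1 : w1 ≠ 0) (hw2 : w2 ≠ 0) (hw3 : w3 ≠ 0)
    (hdN : (-(e*(g01*g03*g12*g23)) + e^2*(g03^2*g12^2 - 2*g02*g03*g12*g13 + g02^2*g13^2 - 2*g01*g02*g13*g23 + g01^2*g23^2) - e^3*(g01*g03*g12*g23)) ≠ 0)
    (hlam : lam ≠ 0)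
    (hlam2 : lam*lam*g01 = e*g02*g12) (hlammu : lam*mu = e*g23)
    (ha1v : a1 = (e*g01*g23/(g13*(e*g02)))⁻¹)
    (ha2v : a2 = e*g12*g03/(g23*g01))
    (hb1v : b1 = (e*g01*w2/(w1*(e*g02)))⁻¹)
    (hb2v : b2 = e*g12*w0/(w2*g01))
    (hc1v : c1 = (e*g01*w3/(w1*(e*g03)))⁻¹)
    (hc2v : c2 = e*g13*w0/(w3*g01))
    (hD2 : D^2 = (1 - a1 - a2)^2 - 2*(1+e)*(a1*a2))
    (hDlin : e = -1 → D = 1 - a1 - a2)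
    (hE0 : k0*0 + k1*(e*g01) + k2*(e*g02) + k3*(e*g03) = 0)
    (hE1 : k0*g01 + k1*0 + k2*(e*g12) + k3*(e*g13) = 0)
    (hE2 : k0*g02 + k1*g12 + k2*0 + k3*(e*g23) = lam)
    (hE3 : k0*g03 + k1*g13 + k2*g23 + k3*0 = T3)
    (hT3 : T3 = mu * ((D - (1 - a1 - a2))/2))
    (hPS : PS = -((D - (1 - a1 - a2))/2)*(1 - b1 - b2) + (a2*b1/c1)*(1 - c1 - c2))
    (hS : S = k0*w0 + k1*w1 + k2*w2 + k3*w3) :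
    S = e*(w2/lam)*(PS/D) := by
  rcases he with he|he <;> subst he
  ·
    have hene : (1:ℂ) ≠ 0 := by norm_num
    have ha1c : a1*(g01*g23) = g13*g02 := by
      rw [ha1v, inv_div, div_mul_eq_mul_div, div_eq_iff (mul_ne_zero (mul_ne_zero hene hg01) hg23)]; try ring
    have ha2c : a2*(g23*g01) = 1*g12*g03 := by
      rw [ha2v, div_mul_eq_mul_div, div_eq_iff (mul_ne_zero hg23 hg01)]; try ring
    have hb1c : b1*(g01*w2) = w1*g02 := by
      rw [hb1v, inv_div, div_mul_eq_mul_div, div_eq_iff (mul_ne_zero (mul_ne_zero hene hg01) hw2)]; try ring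
    have hb2c : b2*(g01*w2) = 1*g12*w0 := by
      rw [hb2v, div_mul_eq_mul_div, div_eq_iff (mul_ne_zero hw2 hg01)]; try ring
    have hc1c : c1*(g01*w3) = w1*g03 := by
      rw [hc1v, inv_div, div_mul_eq_mul_div, div_eq_iff (mul_ne_zero (mul_ne_zero hene hg01) hw3)]; try ring
    have hc2c : c2*(g01*w3) = 1*g13*w0 := by
      rw [hc2v, div_mul_eq_mul_div, div_eq_iff (mul_ne_zero hw3 hg01)]; try ring
    have hc1ne : c1 ≠ 0 := by
      intro h; rw [h, zero_mul] at hc1c; exact (mul_ne_zero hw1 hg03) hc1c.symm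
    have hinv : c1⁻¹*(w1*g03) = g01*w3 := by
      rw [← hc1c, inv_mul_cancel_left₀ hc1ne]
    have hq : a2*b1*c1⁻¹*(g01^2*g23*w2) = 1*g12*g02*(g01*w3) := by
      have h1 : a2*b1*c1⁻¹*(g01^2*g23*w2)*(w1*g03) = 1*g12*g02*(g01*w3)*(w1*g03) := by
        linear_combination (b1*(g01*w2)*(c1⁻¹*(w1*g03)))*ha2c + ((1:ℂ)*g12*g03*(c1⁻¹*(w1*g03)))*hb1c + ((1:ℂ)*g12*g03*(w1*g02))*hinv
      exact mul_right_cancel₀ (mul_ne_zero hw1 hg03) h1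
    have hGa : (1 - a1 - a2)*(g01*g23) = (g01*g23 - g13*g02 - 1*g12*g03) := by
      linear_combination -ha1c - ha2c
    have hMne : (-((1:ℂ)*(g01*g03*g12*g23)) + (1:ℂ)^2*(g03^2*g12^2 - 2*g02*g03*g12*g13 + g02^2*g13^2 - 2*g01*g02*g13*g23 + g01^2*g23^2) - (1:ℂ)^3*(g01*g03*g12*g23)) ≠ 0 := hdN
    have hD2c : D*D*(g01*g23)^2 = (g01*g23 - g13*g02 - 1*g12*g03)^2 - 2*(1+1)*((g13*g02)*(1*g12*g03)) := by
      linear_combination (g01*g23)^2*hD2 + ((1-a1-a2)*(g01*g23) + (g01*g23 - g13*g02 - 1*g12*g03))*hGa - (2*(1+1)*(a1*(g01*g23)))*ha2c - (2*(1+1)*(1*g12*g03))*ha1c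
    have hDD : D*D*(g01*g23)^2 = (-((1:ℂ)*(g01*g03*g12*g23)) + (1:ℂ)^2*(g03^2*g12^2 - 2*g02*g03*g12*g13 + g02^2*g13^2 - 2*g01*g02*g13*g23 + g01^2*g23^2) - (1:ℂ)^3*(g01*g03*g12*g23)) := by linear_combination hD2c
    have hDne : D ≠ 0 := by
      intro h
      apply hMne
      rw [h] at hDD
      linear_combination -hDD
    rw [hS, show (1:ℂ)*(w2/lam)*(PS/D) = 1*w2*PS/(lam*D) by ring, eq_div_iff (mul_ne_zero hlam hDne)]
    apply mul_left_cancel₀ (mul_ne_zero hMne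
      (show (2*g01^2*g23*w2 : ℂ) ≠ 0 from mul_ne_zero (mul_ne_zero (mul_ne_zero two_ne_zero (pow_ne_zero 2 hg01)) hg23) hw2))
    linear_combination (4*g01^2*g12*g13*g23^2*w0*w2*lam*D - 2*g01^2*g03*g12*g23^2*w1*w2*lam*D - 2*g01^2*g03*g12*g13*g23*w2^2*lam*D + 2*g01^2*g03*g12^2*g23*w2*w3*lam*D - 2*g01^2*g02*g13*g23^2*w1*w2*lam*D + 2*g01^2*g02*g13^2*g23*w2^2*lam*D - 2*g01^2*g02*g12*g13*g23*w2*w3*lam*D + 2*g01^3*g23^3*w1*w2*lam*D - 2*g01^3*g13*g23^2*w2^2*lam*D - 2*g01^3*g12*g23^2*w2*w3*lam*D) * hE0 + (-2*g01^2*g03*g12*g23^2*w0*w2*lam*D + 2*g01^2*g03^2*g12*g23*w2^2*lam*D - 2*g01^2*g02*g13*g23^2*w0*w2*lam*D + 4*g01^2*g02*g03*g23^2*w1*w2*lam*D - 2*g01^2*g02*g03*g13*g23*w2^2*lam*D - 2*g01^2*g02*g03*g12*g23*w2*w3*lam*D + 2*g01^2*g02^2*g13*g23*w2*w3*lam*D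 + 2*g01^3*g23^3*w0*w2*lam*D - 2*g01^3*g03*g23^2*w2^2*lam*D - 2*g01^3*g02*g23^2*w2*w3*lam*D) * hE1 + (-2*g01^2*g03*g12*g13*g23*w0*w2*lam*D + 2*g01^2*g03^2*g12*g23*w1*w2*lam*D + 2*g01^2*g02*g13^2*g23*w0*w2*lam*D - 2*g01^2*g02*g03*g13*g23*w1*w2*lam*D - 2*g01^3*g13*g23^2*w0*w2*lam*D - 2*g01^3*g03*g23^2*w1*w2*lam*D + 4*g01^3*g03*g13*g23*w2^2*lam*D - 2*g01^3*g03*g12*g23*w2*w3*lam*D - 2*g01^3*g02*g13*g23*w2*w3*lam*D + 2*g01^4*g23^2*w2*w3*lam*D) * hE2 + (2*g01^2*g03*g12^2*g23*w0*w2*lam*D - 2*g01^2*g02*g12*g13*g23*w0*w2*lam*D - 2*g01^2*g02*g03*g12*g23*w1*w2*lam*D + 2*g01^2*g02^2*g13*g23*w1*w2*lam*D - 2*g01^3*g12*g23^2*w0*w2*lam*D - 2*g01^3*g03*g12*g23*w2^2*lam*D - 2*g01^3*g02*g23^2*w1*w2*lam*D - 2*g01^3*g02*g13*g23*w2^2*lam*D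 + 4*g01^3*g02*g12*g23*w2*w3*lam*D + 2*g01^4*g23^2*w2^2*lam*D) * hE3 + (2*g01^2*g03*g12^2*g23*w0*w2*lam*D - 2*g01^2*g02*g12*g13*g23*w0*w2*lam*D - 2*g01^2*g02*g03*g12*g23*w1*w2*lam*D + 2*g01^2*g02^2*g13*g23*w1*w2*lam*D - 2*g01^3*g12*g23^2*w0*w2*lam*D - 2*g01^3*g03*g12*g23*w2^2*lam*D - 2*g01^3*g02*g23^2*w1*w2*lam*D - 2*g01^3*g02*g13*g23*w2^2*lam*D + 4*g01^3*g02*g12*g23*w2*w3*lam*D + 2*g01^4*g23^2*w2^2*lam*D) * hT3 + (-2*g01^2*g03^2*g12^2*g23*w2^2 + 4*g01^2*g02*g03*g12*g13*g23*w2^2 - 2*g01^2*g02^2*g13^2*g23*w2^2 + 4*g01^3*g03*g12*g23^2*w2^2 + 4*g01^3*g02*g13*g23^2*w2^2 - 2*g01^4*g23^3*w2^2) * hPS + (-2*g03^2*g12^2*w2 + 2*g03^2*g12^2*w2*c2 + 2*g03^2*g12^2*w2*c1 + 4*g02*g03*g12*g13*w2 - 4*g02*g03*g12*g13*w2*c2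 - 4*g02*g03*g12*g13*w2*c1 - 2*g02^2*g13^2*w2 + 2*g02^2*g13^2*w2*c2 + 2*g02^2*g13^2*w2*c1 + 4*g01*g03*g12*g23*w2 - 4*g01*g03*g12*g23*w2*c2 - 4*g01*g03*g12*g23*w2*c1 + 4*g01*g02*g13*g23*w2 - 4*g01*g02*g13*g23*w2*c2 - 4*g01*g02*g13*g23*w2*c1 - 2*g01^2*g23^2*w2 + 2*g01^2*g23^2*w2*c2 + 2*g01^2*g23^2*w2*c1) * hq + (-1*g01^2*g03*g12^2*g23*w0*w2*D + 1*g01^2*g03*g12^2*g23*w0*w2*D*a2 + 1*g01^2*g03*g12^2*g23*w0*w2*D*a1 + 1*g01^2*g03*g12^2*g23*w0*w2*D^2 + 1*g01^2*g02*g12*g13*g23*w0*w2*D - 1*g01^2*g02*g12*g13*g23*w0*w2*D*a2 - 1*g01^2*g02*g12*g13*g23*w0*w2*D*a1 - 1*g01^2*g02*g12*g13*g23*w0*w2*D^2 + 1*g01^2*g02*g03*g12*g23*w1*w2*D - 1*g01^2*g02*g03*g12*g23*w1*w2*D*a2 - 1*g01^2*g02*g03*g12*g23*w1*w2*D*a1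 - 1*g01^2*g02*g03*g12*g23*w1*w2*D^2 - 1*g01^2*g02^2*g13*g23*w1*w2*D + 1*g01^2*g02^2*g13*g23*w1*w2*D*a2 + 1*g01^2*g02^2*g13*g23*w1*w2*D*a1 + 1*g01^2*g02^2*g13*g23*w1*w2*D^2 + 1*g01^3*g12*g23^2*w0*w2*D - 1*g01^3*g12*g23^2*w0*w2*D*a2 - 1*g01^3*g12*g23^2*w0*w2*D*a1 - 1*g01^3*g12*g23^2*w0*w2*D^2 + 1*g01^3*g03*g12*g23*w2^2*D - 1*g01^3*g03*g12*g23*w2^2*D*a2 - 1*g01^3*g03*g12*g23*w2^2*D*a1 - 1*g01^3*g03*g12*g23*w2^2*D^2 + 1*g01^3*g02*g23^2*w1*w2*D - 1*g01^3*g02*g23^2*w1*w2*D*a2 - 1*g01^3*g02*g23^2*w1*w2*D*a1 - 1*g01^3*g02*g23^2*w1*w2*D^2 + 1*g01^3*g02*g13*g23*w2^2*D - 1*g01^3*g02*g13*g23*w2^2*D*a2 - 1*g01^3*g02*g13*g23*w2^2*D*a1 - 1*g01^3*g02*g13*g23*w2^2*D^2 - 2*g01^3*g02*g12*g23*w2*w3*D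 + 2*g01^3*g02*g12*g23*w2*w3*D*a2 + 2*g01^3*g02*g12*g23*w2*w3*D*a1 + 2*g01^3*g02*g12*g23*w2*w3*D^2 - 1*g01^4*g23^2*w2^2*D + 1*g01^4*g23^2*w2^2*D*a2 + 1*g01^4*g23^2*w2^2*D*a1 + 1*g01^4*g23^2*w2^2*D^2) * hlammu + (-2*g01*g03*g12*g13*g23*w0*w2*D + 2*g01*g03^2*g12*g23*w1*w2*D + 2*g01*g02*g13^2*g23*w0*w2*D - 2*g01*g02*g03*g13*g23*w1*w2*D - 2*g01^2*g13*g23^2*w0*w2*D - 2*g01^2*g03*g23^2*w1*w2*D + 4*g01^2*g03*g13*g23*w2^2*D - 2*g01^2*g03*g12*g23*w2*w3*D - 2*g01^2*g02*g13*g23*w2*w3*D + 2*g01^3*g23^2*w2*w3*D) * hlam2 + (1*g01^2*g03*g12^2*g23^2*w0*w2 - 1*g01^2*g02*g12*g13*g23^2*w0*w2 - 1*g01^2*g02*g03*g12*g23^2*w1*w2 + 1*g01^2*g02^2*g13*g23^2*w1*w2 - 1*g01^3*g12*g23^3*w0*w2 - 1*g01^3*g03*g12*g23^2*w2^2 - 1*g01^3*g02*g23^3*w1*w2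 - 1*g01^3*g02*g13*g23^2*w2^2 + 2*g01^3*g02*g12*g23^2*w2*w3 + 1*g01^4*g23^3*w2^2) * hD2 + (1*g01*g03^2*g12^2*g23*w2 - 1*g01*g03^2*g12^2*g23*w2*a2 - 1*g01*g03^2*g12^2*g23*w2*a1 - 1*g01*g03^2*g12^2*g23*w2*D - 2*g01*g02*g03*g12*g13*g23*w2 + 2*g01*g02*g03*g12*g13*g23*w2*a2 + 2*g01*g02*g03*g12*g13*g23*w2*a1 + 2*g01*g02*g03*g12*g13*g23*w2*D + 1*g01*g02^2*g13^2*g23*w2 - 1*g01*g02^2*g13^2*g23*w2*a2 - 1*g01*g02^2*g13^2*g23*w2*a1 - 1*g01*g02^2*g13^2*g23*w2*D - 2*g01^2*g03*g12*g23^2*w2 + 2*g01^2*g03*g12*g23^2*w2*a2 + 2*g01^2*g03*g12*g23^2*w2*a1 + 2*g01^2*g03*g12*g23^2*w2*D - 2*g01^2*g02*g13*g23^2*w2 + 2*g01^2*g02*g13*g23^2*w2*a2 + 2*g01^2*g02*g13*g23^2*w2*a1 + 2*g01^2*g02*g13*g23^2*w2*D + 1*g01^3*g23^3*w2 - 1*g01^3*g23^3*w2*a2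 - 1*g01^3*g23^3*w2*a1 - 1*g01^3*g23^3*w2*D) * hb1c + (1*g01*g03^2*g12^2*g23*w2 - 1*g01*g03^2*g12^2*g23*w2*a2 - 1*g01*g03^2*g12^2*g23*w2*a1 - 1*g01*g03^2*g12^2*g23*w2*D - 2*g01*g02*g03*g12*g13*g23*w2 + 2*g01*g02*g03*g12*g13*g23*w2*a2 + 2*g01*g02*g03*g12*g13*g23*w2*a1 + 2*g01*g02*g03*g12*g13*g23*w2*D + 1*g01*g02^2*g13^2*g23*w2 - 1*g01*g02^2*g13^2*g23*w2*a2 - 1*g01*g02^2*g13^2*g23*w2*a1 - 1*g01*g02^2*g13^2*g23*w2*D - 2*g01^2*g03*g12*g23^2*w2 + 2*g01^2*g03*g12*g23^2*w2*a2 + 2*g01^2*g03*g12*g23^2*w2*a1 + 2*g01^2*g03*g12*g23^2*w2*D - 2*g01^2*g02*g13*g23^2*w2 + 2*g01^2*g02*g13*g23^2*w2*a2 + 2*g01^2*g02*g13*g23^2*w2*a1 + 2*g01^2*g02*g13*g23^2*w2*D + 1*g01^3*g23^3*w2 - 1*g01^3*g23^3*w2*a2 - 1*g01^3*g23^3*w2*a1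 - 1*g01^3*g23^3*w2*D) * hb2c + (2*g02*g03^2*g12^3*w2 - 4*g02^2*g03*g12^2*g13*w2 + 2*g02^3*g12*g13^2*w2 - 4*g01*g02*g03*g12^2*g23*w2 - 4*g01*g02^2*g12*g13*g23*w2 + 2*g01^2*g02*g12*g23^2*w2) * hc1c + (2*g02*g03^2*g12^3*w2 - 4*g02^2*g03*g12^2*g13*w2 + 2*g02^3*g12*g13^2*w2 - 4*g01*g02*g03*g12^2*g23*w2 - 4*g01*g02^2*g12*g13*g23*w2 + 2*g01^2*g02*g12*g23^2*w2) * hc2c + (-1*g03^2*g12^3*w0*w2 + 3*g02*g03*g12^2*g13*w0*w2 - 1*g02*g03^2*g12^2*w1*w2 - 2*g02^2*g12*g13^2*w0*w2 + 1*g02^2*g03*g12*g13*w1*w2 - 2*g01*g03*g12^2*g23*w0*w2*a2 + 1*g01*g03*g12^2*g23*w0*w2*a1 + 1*g01*g03*g12^2*g23*w0*w2*D + 1*g01*g03^2*g12^2*w2^2 + 3*g01*g02*g12*g13*g23*w0*w2 + 2*g01*g02*g12*g13*g23*w0*w2*a2 - 1*g01*g02*g12*g13*g23*w0*w2*a1 -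 1*g01*g02*g12*g13*g23*w0*w2*D + 4*g01*g02*g03*g12*g23*w1*w2 + 2*g01*g02*g03*g12*g23*w1*w2*a2 - 1*g01*g02*g03*g12*g23*w1*w2*a1 - 1*g01*g02*g03*g12*g23*w1*w2*D - 3*g01*g02*g03*g12*g13*w2^2 - 1*g01*g02^2*g13*g23*w1*w2 - 2*g01*g02^2*g13*g23*w1*w2*a2 + 1*g01*g02^2*g13*g23*w1*w2*a1 + 1*g01*g02^2*g13*g23*w1*w2*D + 2*g01*g02^2*g12*g13*w2*w3 + 1*g01^2*g12*g23^2*w0*w2 + 2*g01^2*g12*g23^2*w0*w2*a2 - 1*g01^2*g12*g23^2*w0*w2*a1 - 1*g01^2*g12*g23^2*w0*w2*D + 2*g01^2*g03*g12*g23*w2^2*a2 - 1*g01^2*g03*g12*g23*w2^2*a1 - 1*g01^2*g03*g12*g23*w2^2*D + 1*g01^2*g02*g23^2*w1*w2 + 2*g01^2*g02*g23^2*w1*w2*a2 - 1*g01^2*g02*g23^2*w1*w2*a1 - 1*g01^2*g02*g23^2*w1*w2*D + 1*g01^2*g02*g13*g23*w2^2 + 2*g01^2*g02*g13*g23*w2^2*a2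 - 1*g01^2*g02*g13*g23*w2^2*a1 - 1*g01^2*g02*g13*g23*w2^2*D - 4*g01^2*g02*g12*g23*w2*w3 - 4*g01^2*g02*g12*g23*w2*w3*a2 + 2*g01^2*g02*g12*g23*w2*w3*a1 + 2*g01^2*g02*g12*g23*w2*w3*D - 1*g01^3*g23^2*w2^2 - 2*g01^3*g23^2*w2^2*a2 + 1*g01^3*g23^2*w2^2*a1 + 1*g01^3*g23^2*w2^2*D) * ha1c + (-1*g02*g03*g12^2*g13*w0*w2 - 2*g02*g03^2*g12^2*w1*w2 + 1*g02^2*g12*g13^2*w0*w2 + 5*g02^2*g03*g12*g13*w1*w2 - 3*g02^3*g13^2*w1*w2 - 1*g01*g03*g12^2*g23*w0*w2 + 1*g01*g03*g12^2*g23*w0*w2*a2 + 1*g01*g03*g12^2*g23*w0*w2*D + 6*g01*g02*g12*g13*g23*w0*w2 - 1*g01*g02*g12*g13*g23*w0*w2*a2 - 1*g01*g02*g12*g13*g23*w0*w2*D + 3*g01*g02*g03*g12*g23*w1*w2 - 1*g01*g02*g03*g12*g23*w1*w2*a2 - 1*g01*g02*g03*g12*g23*w1*w2*D - 1*g01*g02*g03*g12*g13*w2^2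 + 2*g01*g02*g03*g12^2*w2*w3 + 2*g01*g02^2*g13*g23*w1*w2 + 1*g01*g02^2*g13*g23*w1*w2*a2 + 1*g01*g02^2*g13*g23*w1*w2*D + 3*g01*g02^2*g13^2*w2^2 - 4*g01*g02^2*g12*g13*w2*w3 + 1*g01^2*g12*g23^2*w0*w2 - 1*g01^2*g12*g23^2*w0*w2*a2 - 1*g01^2*g12*g23^2*w0*w2*D + 1*g01^2*g03*g12*g23*w2^2 - 1*g01^2*g03*g12*g23*w2^2*a2 - 1*g01^2*g03*g12*g23*w2^2*D + 1*g01^2*g02*g23^2*w1*w2 - 1*g01^2*g02*g23^2*w1*w2*a2 - 1*g01^2*g02*g23^2*w1*w2*D - 2*g01^2*g02*g13*g23*w2^2 - 1*g01^2*g02*g13*g23*w2^2*a2 - 1*g01^2*g02*g13*g23*w2^2*D - 4*g01^2*g02*g12*g23*w2*w3 + 2*g01^2*g02*g12*g23*w2*w3*a2 + 2*g01^2*g02*g12*g23*w2*w3*D - 1*g01^3*g23^2*w2^2 + 1*g01^3*g23^2*w2^2*a2 + 1*g01^3*g23^2*w2^2*D) * ha2c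
  ·
    have hene : ((-1):ℂ) ≠ 0 := by norm_num
    have ha1c : a1*(g01*g23) = g13*g02 := by
      rw [ha1v, inv_div, div_mul_eq_mul_div, div_eq_iff (mul_ne_zero (mul_ne_zero hene hg01) hg23)]; try ring
    have ha2c : a2*(g23*g01) = (-1)*g12*g03 := by
      rw [ha2v, div_mul_eq_mul_div, div_eq_iff (mul_ne_zero hg23 hg01)]; try ring
    have hb1c : b1*(g01*w2) = w1*g02 := by
      rw [hb1v, inv_div, div_mul_eq_mul_div, div_eq_iff (mul_ne_zero (mul_ne_zero hene hg01) hw2)]; try ring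
    have hb2c : b2*(g01*w2) = (-1)*g12*w0 := by
      rw [hb2v, div_mul_eq_mul_div, div_eq_iff (mul_ne_zero hw2 hg01)]; try ring
    have hc1c : c1*(g01*w3) = w1*g03 := by
      rw [hc1v, inv_div, div_mul_eq_mul_div, div_eq_iff (mul_ne_zero (mul_ne_zero hene hg01) hw3)]; try ring
    have hc2c : c2*(g01*w3) = (-1)*g13*w0 := by
      rw [hc2v, div_mul_eq_mul_div, div_eq_iff (mul_ne_zero hw3 hg01)]; try ring
    have hc1ne : c1 ≠ 0 := by
      intro h; rw [h, zero_mul] at hc1c; exact (mul_ne_zero hw1 hg03) hc1c.symm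
    have hinv : c1⁻¹*(w1*g03) = g01*w3 := by
      rw [← hc1c, inv_mul_cancel_left₀ hc1ne]
    have hq : a2*b1*c1⁻¹*(g01^2*g23*w2) = (-1)*g12*g02*(g01*w3) := by
      have h1 : a2*b1*c1⁻¹*(g01^2*g23*w2)*(w1*g03) = (-1)*g12*g02*(g01*w3)*(w1*g03) := by
        linear_combination (b1*(g01*w2)*(c1⁻¹*(w1*g03)))*ha2c + (((-1):ℂ)*g12*g03*(c1⁻¹*(w1*g03)))*hb1c + (((-1):ℂ)*g12*g03*(w1*g02))*hinv
      exact mul_right_cancel₀ (mul_ne_zero hw1 hg03) h1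
    have hGa : (1 - a1 - a2)*(g01*g23) = (g01*g23 - g13*g02 - (-1)*g12*g03) := by
      linear_combination -ha1c - ha2c
    have hMne : (-(((-1):ℂ)*(g01*g03*g12*g23)) + ((-1):ℂ)^2*(g03^2*g12^2 - 2*g02*g03*g12*g13 + g02^2*g13^2 - 2*g01*g02*g13*g23 + g01^2*g23^2) - ((-1):ℂ)^3*(g01*g03*g12*g23)) ≠ 0 := hdN
    have hD2c : D*D*(g01*g23)^2 = (g01*g23 - g13*g02 - (-1)*g12*g03)^2 - 2*(1+(-1))*((g13*g02)*((-1)*g12*g03)) := by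
      linear_combination (g01*g23)^2*hD2 + ((1-a1-a2)*(g01*g23) + (g01*g23 - g13*g02 - (-1)*g12*g03))*hGa - (2*(1+(-1))*(a1*(g01*g23)))*ha2c - (2*(1+(-1))*((-1)*g12*g03))*ha1c
    have hDD : D*D*(g01*g23)^2 = (-(((-1):ℂ)*(g01*g03*g12*g23)) + ((-1):ℂ)^2*(g03^2*g12^2 - 2*g02*g03*g12*g13 + g02^2*g13^2 - 2*g01*g02*g13*g23 + g01^2*g23^2) - ((-1):ℂ)^3*(g01*g03*g12*g23)) := by linear_combination hD2c
    have hDne : D ≠ 0 := by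
      intro h
      apply hMne
      rw [h] at hDD
      linear_combination -hDD
    have hDL : D = 1 - a1 - a2 := hDlin rfl
    rw [hS, show ((-1):ℂ)*(w2/lam)*(PS/D) = (-1)*w2*PS/(lam*D) by ring, eq_div_iff (mul_ne_zero hlam hDne)]
    apply mul_left_cancel₀ (mul_ne_zero hMne
      (show (2*g01^2*g23*w2 : ℂ) ≠ 0 from mul_ne_zero (mul_ne_zero (mul_ne_zero two_ne_zero (pow_ne_zero 2 hg01)) hg23) hw2))
    linear_combination (-2*g01^2*g03*g12*g23^2*w1*w2*lam*D + 2*g01^2*g03*g12*g13*g23*w2^2*lam*D - 2*g01^2*g03*g12^2*g23*w2*w3*lam*D + 2*g01^2*g02*g13*g23^2*w1*w2*lam*D - 2*g01^2*g02*g13^2*g23*w2^2*lam*D + 2*g01^2*g02*g12*g13*g23*w2*w3*lam*D - 2*g01^3*g23^3*w1*w2*lam*D + 2*g01^3*g13*g23^2*w2^2*lam*D - 2*g01^3*g12*g23^2*w2*w3*lam*D) * hE0 + (2*g01^2*g03*g12*g23^2*w0*w2*lam*D - 2*g01^2*g03^2*g12*g23*w2^2*lam*D - 2*g01^2*g02*g13*g23^2*w0*w2*lam*D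 + 2*g01^2*g02*g03*g13*g23*w2^2*lam*D + 2*g01^2*g02*g03*g12*g23*w2*w3*lam*D - 2*g01^2*g02^2*g13*g23*w2*w3*lam*D + 2*g01^3*g23^3*w0*w2*lam*D - 2*g01^3*g03*g23^2*w2^2*lam*D + 2*g01^3*g02*g23^2*w2*w3*lam*D) * hE1 + (-2*g01^2*g03*g12*g13*g23*w0*w2*lam*D + 2*g01^2*g03^2*g12*g23*w1*w2*lam*D + 2*g01^2*g02*g13^2*g23*w0*w2*lam*D - 2*g01^2*g02*g03*g13*g23*w1*w2*lam*D - 2*g01^3*g13*g23^2*w0*w2*lam*D + 2*g01^3*g03*g23^2*w1*w2*lam*D - 2*g01^3*g03*g12*g23*w2*w3*lam*D + 2*g01^3*g02*g13*g23*w2*w3*lam*D - 2*g01^4*g23^2*w2*w3*lam*D) * hE2 + (2*g01^2*g03*g12^2*g23*w0*w2*lam*D - 2*g01^2*g02*g12*g13*g23*w0*w2*lam*D - 2*g01^2*g02*g03*g12*g23*w1*w2*lam*D + 2*g01^2*g02^2*g13*g23*w1*w2*lam*D + 2*g01^3*g12*g23^2*w0*w2*lam*D + 2*g01^3*g03*g12*g23*w2^2*lam*D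 - 2*g01^3*g02*g23^2*w1*w2*lam*D - 2*g01^3*g02*g13*g23*w2^2*lam*D + 2*g01^4*g23^2*w2^2*lam*D) * hE3 + (2*g01^2*g03*g12^2*g23*w0*w2*lam*D - 2*g01^2*g02*g12*g13*g23*w0*w2*lam*D - 2*g01^2*g02*g03*g12*g23*w1*w2*lam*D + 2*g01^2*g02^2*g13*g23*w1*w2*lam*D + 2*g01^3*g12*g23^2*w0*w2*lam*D + 2*g01^3*g03*g12*g23*w2^2*lam*D - 2*g01^3*g02*g23^2*w1*w2*lam*D - 2*g01^3*g02*g13*g23*w2^2*lam*D + 2*g01^4*g23^2*w2^2*lam*D) * hT3 + (2*g01^2*g03^2*g12^2*g23*w2^2 - 4*g01^2*g02*g03*g12*g13*g23*w2^2 + 2*g01^2*g02^2*g13^2*g23*w2^2 + 4*g01^3*g03*g12*g23^2*w2^2 - 4*g01^3*g02*g13*g23^2*w2^2 + 2*g01^4*g23^3*w2^2) * hPS + (2*g03^2*g12^2*w2 - 2*g03^2*g12^2*w2*c2 - 2*g03^2*g12^2*w2*c1 - 4*g02*g03*g12*g13*w2 + 4*g02*g03*g12*g13*w2*c2 + 4*g02*g03*g12*g13*w2*c1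 + 2*g02^2*g13^2*w2 - 2*g02^2*g13^2*w2*c2 - 2*g02^2*g13^2*w2*c1 + 4*g01*g03*g12*g23*w2 - 4*g01*g03*g12*g23*w2*c2 - 4*g01*g03*g12*g23*w2*c1 - 4*g01*g02*g13*g23*w2 + 4*g01*g02*g13*g23*w2*c2 + 4*g01*g02*g13*g23*w2*c1 + 2*g01^2*g23^2*w2 - 2*g01^2*g23^2*w2*c2 - 2*g01^2*g23^2*w2*c1) * hq + (-1*g01^2*g03*g12^2*g23*w0*w2*D + 1*g01^2*g03*g12^2*g23*w0*w2*D*a2 + 1*g01^2*g03*g12^2*g23*w0*w2*D*a1 + 1*g01^2*g03*g12^2*g23*w0*w2*D^2 + 1*g01^2*g02*g12*g13*g23*w0*w2*D - 1*g01^2*g02*g12*g13*g23*w0*w2*D*a2 - 1*g01^2*g02*g12*g13*g23*w0*w2*D*a1 - 1*g01^2*g02*g12*g13*g23*w0*w2*D^2 + 1*g01^2*g02*g03*g12*g23*w1*w2*D - 1*g01^2*g02*g03*g12*g23*w1*w2*D*a2 - 1*g01^2*g02*g03*g12*g23*w1*w2*D*a1 - 1*g01^2*g02*g03*g12*g23*w1*w2*D^2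 - 1*g01^2*g02^2*g13*g23*w1*w2*D + 1*g01^2*g02^2*g13*g23*w1*w2*D*a2 + 1*g01^2*g02^2*g13*g23*w1*w2*D*a1 + 1*g01^2*g02^2*g13*g23*w1*w2*D^2 - 1*g01^3*g12*g23^2*w0*w2*D + 1*g01^3*g12*g23^2*w0*w2*D*a2 + 1*g01^3*g12*g23^2*w0*w2*D*a1 + 1*g01^3*g12*g23^2*w0*w2*D^2 - 1*g01^3*g03*g12*g23*w2^2*D + 1*g01^3*g03*g12*g23*w2^2*D*a2 + 1*g01^3*g03*g12*g23*w2^2*D*a1 + 1*g01^3*g03*g12*g23*w2^2*D^2 + 1*g01^3*g02*g23^2*w1*w2*D - 1*g01^3*g02*g23^2*w1*w2*D*a2 - 1*g01^3*g02*g23^2*w1*w2*D*a1 - 1*g01^3*g02*g23^2*w1*w2*D^2 + 1*g01^3*g02*g13*g23*w2^2*D - 1*g01^3*g02*g13*g23*w2^2*D*a2 - 1*g01^3*g02*g13*g23*w2^2*D*a1 - 1*g01^3*g02*g13*g23*w2^2*D^2 - 1*g01^4*g23^2*w2^2*D + 1*g01^4*g23^2*w2^2*D*a2 + 1*g01^4*g23^2*w2^2*D*a1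 + 1*g01^4*g23^2*w2^2*D^2) * hlammu + (-2*g01*g03*g12*g13*g23*w0*w2*D + 2*g01*g03^2*g12*g23*w1*w2*D + 2*g01*g02*g13^2*g23*w0*w2*D - 2*g01*g02*g03*g13*g23*w1*w2*D - 2*g01^2*g13*g23^2*w0*w2*D + 2*g01^2*g03*g23^2*w1*w2*D - 2*g01^2*g03*g12*g23*w2*w3*D + 2*g01^2*g02*g13*g23*w2*w3*D - 2*g01^3*g23^2*w2*w3*D) * hlam2 + (-1*g01^2*g03*g12^2*g23^2*w0*w2 + 1*g01^2*g02*g12*g13*g23^2*w0*w2 + 1*g01^2*g02*g03*g12*g23^2*w1*w2 - 1*g01^2*g02^2*g13*g23^2*w1*w2 - 1*g01^3*g12*g23^3*w0*w2 - 1*g01^3*g03*g12*g23^2*w2^2 + 1*g01^3*g02*g23^3*w1*w2 + 1*g01^3*g02*g13*g23^2*w2^2 - 1*g01^4*g23^3*w2^2) * hD2 + (2*g01*g02*g03*g12^2*g13*g23*w0*w2 - 2*g01*g02*g03^2*g12^2*g23*w1*w2 - 2*g01*g02^2*g12*g13^2*g23*w0*w2 + 2*g01*g02^2*g03*g12*g13*g23*w1*w2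 + 1*g01^2*g03*g12^2*g23^2*w0*w2 - 1*g01^2*g03*g12^2*g23^2*w0*w2*a2 - 1*g01^2*g03*g12^2*g23^2*w0*w2*a1 - 1*g01^2*g03^2*g12^2*g23*w2^2 + 1*g01^2*g03^2*g12^2*g23*w2^2*b2 + 1*g01^2*g03^2*g12^2*g23*w2^2*b1 + 1*g01^2*g02*g12*g13*g23^2*w0*w2 + 1*g01^2*g02*g12*g13*g23^2*w0*w2*a2 + 1*g01^2*g02*g12*g13*g23^2*w0*w2*a1 - 3*g01^2*g02*g03*g12*g23^2*w1*w2 + 1*g01^2*g02*g03*g12*g23^2*w1*w2*a2 + 1*g01^2*g02*g03*g12*g23^2*w1*w2*a1 + 2*g01^2*g02*g03*g12*g13*g23*w2^2 - 2*g01^2*g02*g03*g12*g13*g23*w2^2*b2 - 2*g01^2*g02*g03*g12*g13*g23*w2^2*b1 + 2*g01^2*g02*g03*g12^2*g23*w2*w3 + 1*g01^2*g02^2*g13*g23^2*w1*w2 - 1*g01^2*g02^2*g13*g23^2*w1*w2*a2 - 1*g01^2*g02^2*g13*g23^2*w1*w2*a1 - 1*g01^2*g02^2*g13^2*g23*w2^2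 + 1*g01^2*g02^2*g13^2*g23*w2^2*b2 + 1*g01^2*g02^2*g13^2*g23*w2^2*b1 - 2*g01^2*g02^2*g12*g13*g23*w2*w3 + 1*g01^3*g12*g23^3*w0*w2 - 1*g01^3*g12*g23^3*w0*w2*a2 - 1*g01^3*g12*g23^3*w0*w2*a1 - 1*g01^3*g03*g12*g23^2*w2^2 + 2*g01^3*g03*g12*g23^2*w2^2*b2 + 2*g01^3*g03*g12*g23^2*w2^2*b1 - 1*g01^3*g03*g12*g23^2*w2^2*a2 - 1*g01^3*g03*g12*g23^2*w2^2*a1 - 1*g01^3*g02*g23^3*w1*w2 + 1*g01^3*g02*g23^3*w1*w2*a2 + 1*g01^3*g02*g23^3*w1*w2*a1 + 1*g01^3*g02*g13*g23^2*w2^2 - 2*g01^3*g02*g13*g23^2*w2^2*b2 - 2*g01^3*g02*g13*g23^2*w2^2*b1 + 1*g01^3*g02*g13*g23^2*w2^2*a2 + 1*g01^3*g02*g13*g23^2*w2^2*a1 + 2*g01^3*g02*g12*g23^2*w2*w3 + 1*g01^4*g23^3*w2^2*b2 + 1*g01^4*g23^3*w2^2*b1 - 1*g01^4*g23^3*w2^2*a2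 - 1*g01^4*g23^3*w2^2*a1) * hDL + (2*g02*g03^2*g12^3*w2 - 4*g02^2*g03*g12^2*g13*w2 + 2*g02^3*g12*g13^2*w2 + 4*g01*g02*g03*g12^2*g23*w2 - 4*g01*g02^2*g12*g13*g23*w2 + 2*g01^2*g02*g12*g23^2*w2) * hc1c + (2*g02*g03^2*g12^3*w2 - 4*g02^2*g03*g12^2*g13*w2 + 2*g02^3*g12*g13^2*w2 + 4*g01*g02*g03*g12^2*g23*w2 - 4*g01*g02^2*g12*g13*g23*w2 + 2*g01^2*g02*g12*g23^2*w2) * hc2c + (-2*g02*g03*g12^2*g13*w0*w2 + 2*g02*g03^2*g12^2*w1*w2 + 2*g02^2*g12*g13^2*w0*w2 - 2*g02^2*g03*g12*g13*w1*w2 - 2*g01*g02*g12*g13*g23*w0*w2 + 2*g01*g02*g03*g12*g23*w1*w2 - 2*g01*g02*g03*g12^2*w2*w3 + 2*g01*g02^2*g12*g13*w2*w3 - 2*g01^2*g02*g12*g23*w2*w3) * ha1c + (-2*g02*g03*g12^2*g13*w0*w2 + 2*g02*g03^2*g12^2*w1*w2 + 2*g02^2*g12*g13^2*w0*w2 - 2*g02^2*g03*g12*g13*w1*w2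 - 2*g01*g02*g12*g13*g23*w0*w2 + 2*g01*g02*g03*g12*g23*w1*w2 - 2*g01*g02*g03*g12^2*w2*w3 + 2*g01*g02^2*g12*g13*w2*w3 - 2*g01^2*g02*g12*g23*w2*w3) * ha2c

private lemma main_alg_f (e g01 g02 g03 g12 g13 g23 w0 w1 w2 w3 lam mu D a1 a2 b1 b2 c1 c2 T3 PS S k0 k1 k2 k3 : ℂ)
    (he : e = 1 ∨ e = -1)
    (hg01 : g01 ≠ 0) (hg02 : g02 ≠ 0) (hg03 : g03 ≠ 0)
    (hg12 : g12 ≠ 0) (hg13 : g13 ≠ 0) (hg23 : g23 ≠ 0)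
    (hw1 : w1 ≠ 0) (hw2 : w2 ≠ 0) (hw3 : w3 ≠ 0)
    (hdN : (-(e*(g01*g03*g12*g23)) + e^2*(g03^2*g12^2 - 2*g02*g03*g12*g13 + g02^2*g13^2 - 2*g01*g02*g13*g23 + g01^2*g23^2) - e^3*(g01*g03*g12*g23)) ≠ 0)
    (hlam : lam ≠ 0)
    (hlam2 : lam*lam*g01 = e*g02*g12) (hlammu : lam*mu = e*g23)
    (ha1v : a1 = (e*g01*g23/(g13*(e*g02)))⁻¹)
    (ha2v : a2 = e*g12*g03/(g23*g01))
    (hb1v : b1 = (e*g01*w2/(w1*(e*g02)))⁻¹)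
    (hb2v : b2 = e*g12*w0/(w2*g01))
    (hc1v : c1 = (e*g01*w3/(w1*(e*g03)))⁻¹)
    (hc2v : c2 = e*g13*w0/(w3*g01))
    (hD2 : D^2 = (1 - a1 - a2)^2 - 2*(1+e)*(a1*a2))
    (hDlin : e = -1 → D = 1 - a1 - a2)
    (hE0 : k0*0 + k1*(e*g01) + k2*(e*g02) + k3*(e*g03) = 0)
    (hE1 : k0*g01 + k1*0 + k2*(e*g12) + k3*(e*g13) = 0)
    (hE2 : k0*g02 + k1*g12 + k2*0 + k3*(e*g23) = -lam)
    (hE3 : k0*g03 + k1*g13 + k2*g23 + k3*0 = T3)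
    (hT3 : T3 = e*mu * ((D + (1 - a1 - a2))/2))
    (hPS : PS = ((D + (1 - a1 - a2))/2)*(1 - b1 - b2) + (a2*b1/c1)*(1 - c1 - c2))
    (hS : S = k0*w0 + k1*w1 + k2*w2 + k3*w3) :
    S = (w2/lam)*(PS/D) := by
  rcases he with he|he <;> subst he
  ·
    have hene : (1:ℂ) ≠ 0 := by norm_num
    have ha1c : a1*(g01*g23) = g13*g02 := by
      rw [ha1v, inv_div, div_mul_eq_mul_div, div_eq_iff (mul_ne_zero (mul_ne_zero hene hg01) hg23)]; try ring
    have ha2c : a2*(g23*g01) = 1*g12*g03 := by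
      rw [ha2v, div_mul_eq_mul_div, div_eq_iff (mul_ne_zero hg23 hg01)]; try ring
    have hb1c : b1*(g01*w2) = w1*g02 := by
      rw [hb1v, inv_div, div_mul_eq_mul_div, div_eq_iff (mul_ne_zero (mul_ne_zero hene hg01) hw2)]; try ring
    have hb2c : b2*(g01*w2) = 1*g12*w0 := by
      rw [hb2v, div_mul_eq_mul_div, div_eq_iff (mul_ne_zero hw2 hg01)]; try ring
    have hc1c : c1*(g01*w3) = w1*g03 := by
      rw [hc1v, inv_div, div_mul_eq_mul_div, div_eq_iff (mul_ne_zero (mul_ne_zero hene hg01) hw3)]; try ring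
    have hc2c : c2*(g01*w3) = 1*g13*w0 := by
      rw [hc2v, div_mul_eq_mul_div, div_eq_iff (mul_ne_zero hw3 hg01)]; try ring
    have hc1ne : c1 ≠ 0 := by
      intro h; rw [h, zero_mul] at hc1c; exact (mul_ne_zero hw1 hg03) hc1c.symm
    have hinv : c1⁻¹*(w1*g03) = g01*w3 := by
      rw [← hc1c, inv_mul_cancel_left₀ hc1ne]
    have hq : a2*b1*c1⁻¹*(g01^2*g23*w2) = 1*g12*g02*(g01*w3) := by
      have h1 : a2*b1*c1⁻¹*(g01^2*g23*w2)*(w1*g03) = 1*g12*g02*(g01*w3)*(w1*g03) := by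
        linear_combination (b1*(g01*w2)*(c1⁻¹*(w1*g03)))*ha2c + ((1:ℂ)*g12*g03*(c1⁻¹*(w1*g03)))*hb1c + ((1:ℂ)*g12*g03*(w1*g02))*hinv
      exact mul_right_cancel₀ (mul_ne_zero hw1 hg03) h1
    have hGa : (1 - a1 - a2)*(g01*g23) = (g01*g23 - g13*g02 - 1*g12*g03) := by
      linear_combination -ha1c - ha2c
    have hMne : (-((1:ℂ)*(g01*g03*g12*g23)) + (1:ℂ)^2*(g03^2*g12^2 - 2*g02*g03*g12*g13 + g02^2*g13^2 - 2*g01*g02*g13*g23 + g01^2*g23^2) - (1:ℂ)^3*(g01*g03*g12*g23)) ≠ 0 := hdN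
    have hD2c : D*D*(g01*g23)^2 = (g01*g23 - g13*g02 - 1*g12*g03)^2 - 2*(1+1)*((g13*g02)*(1*g12*g03)) := by
      linear_combination (g01*g23)^2*hD2 + ((1-a1-a2)*(g01*g23) + (g01*g23 - g13*g02 - 1*g12*g03))*hGa - (2*(1+1)*(a1*(g01*g23)))*ha2c - (2*(1+1)*(1*g12*g03))*ha1c
    have hDD : D*D*(g01*g23)^2 = (-((1:ℂ)*(g01*g03*g12*g23)) + (1:ℂ)^2*(g03^2*g12^2 - 2*g02*g03*g12*g13 + g02^2*g13^2 - 2*g01*g02*g13*g23 + g01^2*g23^2) - (1:ℂ)^3*(g01*g03*g12*g23)) := by linear_combination hD2c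
    have hDne : D ≠ 0 := by
      intro h
      apply hMne
      rw [h] at hDD
      linear_combination -hDD
    rw [hS, show (w2/lam)*(PS/D) = w2*PS/(lam*D) by ring, eq_div_iff (mul_ne_zero hlam hDne)]
    apply mul_left_cancel₀ (mul_ne_zero hMne
      (show (2*g01^2*g23*w2 : ℂ) ≠ 0 from mul_ne_zero (mul_ne_zero (mul_ne_zero two_ne_zero (pow_ne_zero 2 hg01)) hg23) hw2))
    linear_combination (4*g01^2*g12*g13*g23^2*w0*w2*lam*D - 2*g01^2*g03*g12*g23^2*w1*w2*lam*D - 2*g01^2*g03*g12*g13*g23*w2^2*lam*D + 2*g01^2*g03*g12^2*g23*w2*w3*lam*D - 2*g01^2*g02*g13*g23^2*w1*w2*lam*D + 2*g01^2*g02*g13^2*g23*w2^2*lam*D - 2*g01^2*g02*g12*g13*g23*w2*w3*lam*D + 2*g01^3*g23^3*w1*w2*lam*D - 2*g01^3*g13*g23^2*w2^2*lam*D - 2*g01^3*g12*g23^2*w2*w3*lam*D) * hE0 + (-2*g01^2*g03*g12*g23^2*w0*w2*lam*D + 2*g01^2*g03^2*g12*g23*w2^2*lam*D - 2*g01^2*g02*g13*g23^2*w0*w2*lam*D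 + 4*g01^2*g02*g03*g23^2*w1*w2*lam*D - 2*g01^2*g02*g03*g13*g23*w2^2*lam*D - 2*g01^2*g02*g03*g12*g23*w2*w3*lam*D + 2*g01^2*g02^2*g13*g23*w2*w3*lam*D + 2*g01^3*g23^3*w0*w2*lam*D - 2*g01^3*g03*g23^2*w2^2*lam*D - 2*g01^3*g02*g23^2*w2*w3*lam*D) * hE1 + (-2*g01^2*g03*g12*g13*g23*w0*w2*lam*D + 2*g01^2*g03^2*g12*g23*w1*w2*lam*D + 2*g01^2*g02*g13^2*g23*w0*w2*lam*D - 2*g01^2*g02*g03*g13*g23*w1*w2*lam*D - 2*g01^3*g13*g23^2*w0*w2*lam*D - 2*g01^3*g03*g23^2*w1*w2*lam*D + 4*g01^3*g03*g13*g23*w2^2*lam*D - 2*g01^3*g03*g12*g23*w2*w3*lam*D - 2*g01^3*g02*g13*g23*w2*w3*lam*D + 2*g01^4*g23^2*w2*w3*lam*D) * hE2 + (2*g01^2*g03*g12^2*g23*w0*w2*lam*D - 2*g01^2*g02*g12*g13*g23*w0*w2*lam*D - 2*g01^2*g02*g03*g12*g23*w1*w2*lam*D + 2*g01^2*g02^2*g13*g23*w1*w2*lam*D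 - 2*g01^3*g12*g23^2*w0*w2*lam*D - 2*g01^3*g03*g12*g23*w2^2*lam*D - 2*g01^3*g02*g23^2*w1*w2*lam*D - 2*g01^3*g02*g13*g23*w2^2*lam*D + 4*g01^3*g02*g12*g23*w2*w3*lam*D + 2*g01^4*g23^2*w2^2*lam*D) * hE3 + (2*g01^2*g03*g12^2*g23*w0*w2*lam*D - 2*g01^2*g02*g12*g13*g23*w0*w2*lam*D - 2*g01^2*g02*g03*g12*g23*w1*w2*lam*D + 2*g01^2*g02^2*g13*g23*w1*w2*lam*D - 2*g01^3*g12*g23^2*w0*w2*lam*D - 2*g01^3*g03*g12*g23*w2^2*lam*D - 2*g01^3*g02*g23^2*w1*w2*lam*D - 2*g01^3*g02*g13*g23*w2^2*lam*D + 4*g01^3*g02*g12*g23*w2*w3*lam*D + 2*g01^4*g23^2*w2^2*lam*D) * hT3 + (-2*g01^2*g03^2*g12^2*g23*w2^2 + 4*g01^2*g02*g03*g12*g13*g23*w2^2 - 2*g01^2*g02^2*g13^2*g23*w2^2 + 4*g01^3*g03*g12*g23^2*w2^2 + 4*g01^3*g02*g13*g23^2*w2^2 - 2*g01^4*g23^3*w2^2)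 * hPS + (-2*g03^2*g12^2*w2 + 2*g03^2*g12^2*w2*c2 + 2*g03^2*g12^2*w2*c1 + 4*g02*g03*g12*g13*w2 - 4*g02*g03*g12*g13*w2*c2 - 4*g02*g03*g12*g13*w2*c1 - 2*g02^2*g13^2*w2 + 2*g02^2*g13^2*w2*c2 + 2*g02^2*g13^2*w2*c1 + 4*g01*g03*g12*g23*w2 - 4*g01*g03*g12*g23*w2*c2 - 4*g01*g03*g12*g23*w2*c1 + 4*g01*g02*g13*g23*w2 - 4*g01*g02*g13*g23*w2*c2 - 4*g01*g02*g13*g23*w2*c1 - 2*g01^2*g23^2*w2 + 2*g01^2*g23^2*w2*c2 + 2*g01^2*g23^2*w2*c1) * hq + (1*g01^2*g03*g12^2*g23*w0*w2*D - 1*g01^2*g03*g12^2*g23*w0*w2*D*a2 - 1*g01^2*g03*g12^2*g23*w0*w2*D*a1 + 1*g01^2*g03*g12^2*g23*w0*w2*D^2 - 1*g01^2*g02*g12*g13*g23*w0*w2*D + 1*g01^2*g02*g12*g13*g23*w0*w2*D*a2 + 1*g01^2*g02*g12*g13*g23*w0*w2*D*a1 - 1*g01^2*g02*g12*g13*g23*w0*w2*D^2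 - 1*g01^2*g02*g03*g12*g23*w1*w2*D + 1*g01^2*g02*g03*g12*g23*w1*w2*D*a2 + 1*g01^2*g02*g03*g12*g23*w1*w2*D*a1 - 1*g01^2*g02*g03*g12*g23*w1*w2*D^2 + 1*g01^2*g02^2*g13*g23*w1*w2*D - 1*g01^2*g02^2*g13*g23*w1*w2*D*a2 - 1*g01^2*g02^2*g13*g23*w1*w2*D*a1 + 1*g01^2*g02^2*g13*g23*w1*w2*D^2 - 1*g01^3*g12*g23^2*w0*w2*D + 1*g01^3*g12*g23^2*w0*w2*D*a2 + 1*g01^3*g12*g23^2*w0*w2*D*a1 - 1*g01^3*g12*g23^2*w0*w2*D^2 - 1*g01^3*g03*g12*g23*w2^2*D + 1*g01^3*g03*g12*g23*w2^2*D*a2 + 1*g01^3*g03*g12*g23*w2^2*D*a1 - 1*g01^3*g03*g12*g23*w2^2*D^2 - 1*g01^3*g02*g23^2*w1*w2*D + 1*g01^3*g02*g23^2*w1*w2*D*a2 + 1*g01^3*g02*g23^2*w1*w2*D*a1 - 1*g01^3*g02*g23^2*w1*w2*D^2 - 1*g01^3*g02*g13*g23*w2^2*D + 1*g01^3*g02*g13*g23*w2^2*D*a2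 + 1*g01^3*g02*g13*g23*w2^2*D*a1 - 1*g01^3*g02*g13*g23*w2^2*D^2 + 2*g01^3*g02*g12*g23*w2*w3*D - 2*g01^3*g02*g12*g23*w2*w3*D*a2 - 2*g01^3*g02*g12*g23*w2*w3*D*a1 + 2*g01^3*g02*g12*g23*w2*w3*D^2 + 1*g01^4*g23^2*w2^2*D - 1*g01^4*g23^2*w2^2*D*a2 - 1*g01^4*g23^2*w2^2*D*a1 + 1*g01^4*g23^2*w2^2*D^2) * hlammu + (2*g01*g03*g12*g13*g23*w0*w2*D - 2*g01*g03^2*g12*g23*w1*w2*D - 2*g01*g02*g13^2*g23*w0*w2*D + 2*g01*g02*g03*g13*g23*w1*w2*D + 2*g01^2*g13*g23^2*w0*w2*D + 2*g01^2*g03*g23^2*w1*w2*D - 4*g01^2*g03*g13*g23*w2^2*D + 2*g01^2*g03*g12*g23*w2*w3*D + 2*g01^2*g02*g13*g23*w2*w3*D - 2*g01^3*g23^2*w2*w3*D) * hlam2 + (1*g01^2*g03*g12^2*g23^2*w0*w2 - 1*g01^2*g02*g12*g13*g23^2*w0*w2 - 1*g01^2*g02*g03*g12*g23^2*w1*w2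 + 1*g01^2*g02^2*g13*g23^2*w1*w2 - 1*g01^3*g12*g23^3*w0*w2 - 1*g01^3*g03*g12*g23^2*w2^2 - 1*g01^3*g02*g23^3*w1*w2 - 1*g01^3*g02*g13*g23^2*w2^2 + 2*g01^3*g02*g12*g23^2*w2*w3 + 1*g01^4*g23^3*w2^2) * hD2 + (1*g01*g03^2*g12^2*g23*w2 - 1*g01*g03^2*g12^2*g23*w2*a2 - 1*g01*g03^2*g12^2*g23*w2*a1 + 1*g01*g03^2*g12^2*g23*w2*D - 2*g01*g02*g03*g12*g13*g23*w2 + 2*g01*g02*g03*g12*g13*g23*w2*a2 + 2*g01*g02*g03*g12*g13*g23*w2*a1 - 2*g01*g02*g03*g12*g13*g23*w2*D + 1*g01*g02^2*g13^2*g23*w2 - 1*g01*g02^2*g13^2*g23*w2*a2 - 1*g01*g02^2*g13^2*g23*w2*a1 + 1*g01*g02^2*g13^2*g23*w2*D - 2*g01^2*g03*g12*g23^2*w2 + 2*g01^2*g03*g12*g23^2*w2*a2 + 2*g01^2*g03*g12*g23^2*w2*a1 - 2*g01^2*g03*g12*g23^2*w2*D - 2*g01^2*g02*g13*g23^2*w2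 + 2*g01^2*g02*g13*g23^2*w2*a2 + 2*g01^2*g02*g13*g23^2*w2*a1 - 2*g01^2*g02*g13*g23^2*w2*D + 1*g01^3*g23^3*w2 - 1*g01^3*g23^3*w2*a2 - 1*g01^3*g23^3*w2*a1 + 1*g01^3*g23^3*w2*D) * hb1c + (1*g01*g03^2*g12^2*g23*w2 - 1*g01*g03^2*g12^2*g23*w2*a2 - 1*g01*g03^2*g12^2*g23*w2*a1 + 1*g01*g03^2*g12^2*g23*w2*D - 2*g01*g02*g03*g12*g13*g23*w2 + 2*g01*g02*g03*g12*g13*g23*w2*a2 + 2*g01*g02*g03*g12*g13*g23*w2*a1 - 2*g01*g02*g03*g12*g13*g23*w2*D + 1*g01*g02^2*g13^2*g23*w2 - 1*g01*g02^2*g13^2*g23*w2*a2 - 1*g01*g02^2*g13^2*g23*w2*a1 + 1*g01*g02^2*g13^2*g23*w2*D - 2*g01^2*g03*g12*g23^2*w2 + 2*g01^2*g03*g12*g23^2*w2*a2 + 2*g01^2*g03*g12*g23^2*w2*a1 - 2*g01^2*g03*g12*g23^2*w2*D - 2*g01^2*g02*g13*g23^2*w2 + 2*g01^2*g02*g13*g23^2*w2*a2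 + 2*g01^2*g02*g13*g23^2*w2*a1 - 2*g01^2*g02*g13*g23^2*w2*D + 1*g01^3*g23^3*w2 - 1*g01^3*g23^3*w2*a2 - 1*g01^3*g23^3*w2*a1 + 1*g01^3*g23^3*w2*D) * hb2c + (2*g02*g03^2*g12^3*w2 - 4*g02^2*g03*g12^2*g13*w2 + 2*g02^3*g12*g13^2*w2 - 4*g01*g02*g03*g12^2*g23*w2 - 4*g01*g02^2*g12*g13*g23*w2 + 2*g01^2*g02*g12*g23^2*w2) * hc1c + (2*g02*g03^2*g12^3*w2 - 4*g02^2*g03*g12^2*g13*w2 + 2*g02^3*g12*g13^2*w2 - 4*g01*g02*g03*g12^2*g23*w2 - 4*g01*g02^2*g12*g13*g23*w2 + 2*g01^2*g02*g12*g23^2*w2) * hc2c + (-1*g03^2*g12^3*w0*w2 + 3*g02*g03*g12^2*g13*w0*w2 - 1*g02*g03^2*g12^2*w1*w2 - 2*g02^2*g12*g13^2*w0*w2 + 1*g02^2*g03*g12*g13*w1*w2 - 2*g01*g03*g12^2*g23*w0*w2*a2 + 1*g01*g03*g12^2*g23*w0*w2*a1 - 1*g01*g03*g12^2*g23*w0*w2*D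 + 1*g01*g03^2*g12^2*w2^2 + 3*g01*g02*g12*g13*g23*w0*w2 + 2*g01*g02*g12*g13*g23*w0*w2*a2 - 1*g01*g02*g12*g13*g23*w0*w2*a1 + 1*g01*g02*g12*g13*g23*w0*w2*D + 4*g01*g02*g03*g12*g23*w1*w2 + 2*g01*g02*g03*g12*g23*w1*w2*a2 - 1*g01*g02*g03*g12*g23*w1*w2*a1 + 1*g01*g02*g03*g12*g23*w1*w2*D - 3*g01*g02*g03*g12*g13*w2^2 - 1*g01*g02^2*g13*g23*w1*w2 - 2*g01*g02^2*g13*g23*w1*w2*a2 + 1*g01*g02^2*g13*g23*w1*w2*a1 - 1*g01*g02^2*g13*g23*w1*w2*D + 2*g01*g02^2*g12*g13*w2*w3 + 1*g01^2*g12*g23^2*w0*w2 + 2*g01^2*g12*g23^2*w0*w2*a2 - 1*g01^2*g12*g23^2*w0*w2*a1 + 1*g01^2*g12*g23^2*w0*w2*D + 2*g01^2*g03*g12*g23*w2^2*a2 - 1*g01^2*g03*g12*g23*w2^2*a1 + 1*g01^2*g03*g12*g23*w2^2*D + 1*g01^2*g02*g23^2*w1*w2 + 2*g01^2*g02*g23^2*w1*w2*a2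 - 1*g01^2*g02*g23^2*w1*w2*a1 + 1*g01^2*g02*g23^2*w1*w2*D + 1*g01^2*g02*g13*g23*w2^2 + 2*g01^2*g02*g13*g23*w2^2*a2 - 1*g01^2*g02*g13*g23*w2^2*a1 + 1*g01^2*g02*g13*g23*w2^2*D - 4*g01^2*g02*g12*g23*w2*w3 - 4*g01^2*g02*g12*g23*w2*w3*a2 + 2*g01^2*g02*g12*g23*w2*w3*a1 - 2*g01^2*g02*g12*g23*w2*w3*D - 1*g01^3*g23^2*w2^2 - 2*g01^3*g23^2*w2^2*a2 + 1*g01^3*g23^2*w2^2*a1 - 1*g01^3*g23^2*w2^2*D) * ha1c + (-1*g02*g03*g12^2*g13*w0*w2 - 2*g02*g03^2*g12^2*w1*w2 + 1*g02^2*g12*g13^2*w0*w2 + 5*g02^2*g03*g12*g13*w1*w2 - 3*g02^3*g13^2*w1*w2 - 1*g01*g03*g12^2*g23*w0*w2 + 1*g01*g03*g12^2*g23*w0*w2*a2 - 1*g01*g03*g12^2*g23*w0*w2*D + 6*g01*g02*g12*g13*g23*w0*w2 - 1*g01*g02*g12*g13*g23*w0*w2*a2 + 1*g01*g02*g12*g13*g23*w0*w2*D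 + 3*g01*g02*g03*g12*g23*w1*w2 - 1*g01*g02*g03*g12*g23*w1*w2*a2 + 1*g01*g02*g03*g12*g23*w1*w2*D - 1*g01*g02*g03*g12*g13*w2^2 + 2*g01*g02*g03*g12^2*w2*w3 + 2*g01*g02^2*g13*g23*w1*w2 + 1*g01*g02^2*g13*g23*w1*w2*a2 - 1*g01*g02^2*g13*g23*w1*w2*D + 3*g01*g02^2*g13^2*w2^2 - 4*g01*g02^2*g12*g13*w2*w3 + 1*g01^2*g12*g23^2*w0*w2 - 1*g01^2*g12*g23^2*w0*w2*a2 + 1*g01^2*g12*g23^2*w0*w2*D + 1*g01^2*g03*g12*g23*w2^2 - 1*g01^2*g03*g12*g23*w2^2*a2 + 1*g01^2*g03*g12*g23*w2^2*D + 1*g01^2*g02*g23^2*w1*w2 - 1*g01^2*g02*g23^2*w1*w2*a2 + 1*g01^2*g02*g23^2*w1*w2*D - 2*g01^2*g02*g13*g23*w2^2 - 1*g01^2*g02*g13*g23*w2^2*a2 + 1*g01^2*g02*g13*g23*w2^2*D - 4*g01^2*g02*g12*g23*w2*w3 + 2*g01^2*g02*g12*g23*w2*w3*a2 - 2*g01^2*g02*g12*g23*w2*w3*D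 - 1*g01^3*g23^2*w2^2 + 1*g01^3*g23^2*w2^2*a2 - 1*g01^3*g23^2*w2^2*D) * ha2c
  ·
    have hene : ((-1):ℂ) ≠ 0 := by norm_num
    have ha1c : a1*(g01*g23) = g13*g02 := by
      rw [ha1v, inv_div, div_mul_eq_mul_div, div_eq_iff (mul_ne_zero (mul_ne_zero hene hg01) hg23)]; try ring
    have ha2c : a2*(g23*g01) = (-1)*g12*g03 := by
      rw [ha2v, div_mul_eq_mul_div, div_eq_iff (mul_ne_zero hg23 hg01)]; try ring
    have hb1c : b1*(g01*w2) = w1*g02 := by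
      rw [hb1v, inv_div, div_mul_eq_mul_div, div_eq_iff (mul_ne_zero (mul_ne_zero hene hg01) hw2)]; try ring
    have hb2c : b2*(g01*w2) = (-1)*g12*w0 := by
      rw [hb2v, div_mul_eq_mul_div, div_eq_iff (mul_ne_zero hw2 hg01)]; try ring
    have hc1c : c1*(g01*w3) = w1*g03 := by
      rw [hc1v, inv_div, div_mul_eq_mul_div, div_eq_iff (mul_ne_zero (mul_ne_zero hene hg01) hw3)]; try ring
    have hc2c : c2*(g01*w3) = (-1)*g13*w0 := by
      rw [hc2v, div_mul_eq_mul_div, div_eq_iff (mul_ne_zero hw3 hg01)]; try ring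
    have hc1ne : c1 ≠ 0 := by
      intro h; rw [h, zero_mul] at hc1c; exact (mul_ne_zero hw1 hg03) hc1c.symm
    have hinv : c1⁻¹*(w1*g03) = g01*w3 := by
      rw [← hc1c, inv_mul_cancel_left₀ hc1ne]
    have hq : a2*b1*c1⁻¹*(g01^2*g23*w2) = (-1)*g12*g02*(g01*w3) := by
      have h1 : a2*b1*c1⁻¹*(g01^2*g23*w2)*(w1*g03) = (-1)*g12*g02*(g01*w3)*(w1*g03) := by
        linear_combination (b1*(g01*w2)*(c1⁻¹*(w1*g03)))*ha2c + (((-1):ℂ)*g12*g03*(c1⁻¹*(w1*g03)))*hb1c + (((-1):ℂ)*g12*g03*(w1*g02))*hinv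
      exact mul_right_cancel₀ (mul_ne_zero hw1 hg03) h1
    have hGa : (1 - a1 - a2)*(g01*g23) = (g01*g23 - g13*g02 - (-1)*g12*g03) := by
      linear_combination -ha1c - ha2c
    have hMne : (-(((-1):ℂ)*(g01*g03*g12*g23)) + ((-1):ℂ)^2*(g03^2*g12^2 - 2*g02*g03*g12*g13 + g02^2*g13^2 - 2*g01*g02*g13*g23 + g01^2*g23^2) - ((-1):ℂ)^3*(g01*g03*g12*g23)) ≠ 0 := hdN
    have hD2c : D*D*(g01*g23)^2 = (g01*g23 - g13*g02 - (-1)*g12*g03)^2 - 2*(1+(-1))*((g13*g02)*((-1)*g12*g03)) := by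
      linear_combination (g01*g23)^2*hD2 + ((1-a1-a2)*(g01*g23) + (g01*g23 - g13*g02 - (-1)*g12*g03))*hGa - (2*(1+(-1))*(a1*(g01*g23)))*ha2c - (2*(1+(-1))*((-1)*g12*g03))*ha1c
    have hDD : D*D*(g01*g23)^2 = (-(((-1):ℂ)*(g01*g03*g12*g23)) + ((-1):ℂ)^2*(g03^2*g12^2 - 2*g02*g03*g12*g13 + g02^2*g13^2 - 2*g01*g02*g13*g23 + g01^2*g23^2) - ((-1):ℂ)^3*(g01*g03*g12*g23)) := by linear_combination hD2c
    have hDne : D ≠ 0 := by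
      intro h
      apply hMne
      rw [h] at hDD
      linear_combination -hDD
    have hDL : D = 1 - a1 - a2 := hDlin rfl
    rw [hS, show (w2/lam)*(PS/D) = w2*PS/(lam*D) by ring, eq_div_iff (mul_ne_zero hlam hDne)]
    apply mul_left_cancel₀ (mul_ne_zero hMne
      (show (2*g01^2*g23*w2 : ℂ) ≠ 0 from mul_ne_zero (mul_ne_zero (mul_ne_zero two_ne_zero (pow_ne_zero 2 hg01)) hg23) hw2))
    linear_combination (-2*g01^2*g03*g12*g23^2*w1*w2*lam*D + 2*g01^2*g03*g12*g13*g23*w2^2*lam*D - 2*g01^2*g03*g12^2*g23*w2*w3*lam*D + 2*g01^2*g02*g13*g23^2*w1*w2*lam*D - 2*g01^2*g02*g13^2*g23*w2^2*lam*D + 2*g01^2*g02*g12*g13*g23*w2*w3*lam*D - 2*g01^3*g23^3*w1*w2*lam*D + 2*g01^3*g13*g23^2*w2^2*lam*D - 2*g01^3*g12*g23^2*w2*w3*lam*D) * hE0 + (2*g01^2*g03*g12*g23^2*w0*w2*lam*D - 2*g01^2*g03^2*g12*g23*w2^2*lam*D - 2*g01^2*g02*g13*g23^2*w0*w2*lam*D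 + 2*g01^2*g02*g03*g13*g23*w2^2*lam*D + 2*g01^2*g02*g03*g12*g23*w2*w3*lam*D - 2*g01^2*g02^2*g13*g23*w2*w3*lam*D + 2*g01^3*g23^3*w0*w2*lam*D - 2*g01^3*g03*g23^2*w2^2*lam*D + 2*g01^3*g02*g23^2*w2*w3*lam*D) * hE1 + (-2*g01^2*g03*g12*g13*g23*w0*w2*lam*D + 2*g01^2*g03^2*g12*g23*w1*w2*lam*D + 2*g01^2*g02*g13^2*g23*w0*w2*lam*D - 2*g01^2*g02*g03*g13*g23*w1*w2*lam*D - 2*g01^3*g13*g23^2*w0*w2*lam*D + 2*g01^3*g03*g23^2*w1*w2*lam*D - 2*g01^3*g03*g12*g23*w2*w3*lam*D + 2*g01^3*g02*g13*g23*w2*w3*lam*D - 2*g01^4*g23^2*w2*w3*lam*D) * hE2 + (2*g01^2*g03*g12^2*g23*w0*w2*lam*D - 2*g01^2*g02*g12*g13*g23*w0*w2*lam*D - 2*g01^2*g02*g03*g12*g23*w1*w2*lam*D + 2*g01^2*g02^2*g13*g23*w1*w2*lam*D + 2*g01^3*g12*g23^2*w0*w2*lam*D + 2*g01^3*g03*g12*g23*w2^2*lam*D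 - 2*g01^3*g02*g23^2*w1*w2*lam*D - 2*g01^3*g02*g13*g23*w2^2*lam*D + 2*g01^4*g23^2*w2^2*lam*D) * hE3 + (2*g01^2*g03*g12^2*g23*w0*w2*lam*D - 2*g01^2*g02*g12*g13*g23*w0*w2*lam*D - 2*g01^2*g02*g03*g12*g23*w1*w2*lam*D + 2*g01^2*g02^2*g13*g23*w1*w2*lam*D + 2*g01^3*g12*g23^2*w0*w2*lam*D + 2*g01^3*g03*g12*g23*w2^2*lam*D - 2*g01^3*g02*g23^2*w1*w2*lam*D - 2*g01^3*g02*g13*g23*w2^2*lam*D + 2*g01^4*g23^2*w2^2*lam*D) * hT3 + (-2*g01^2*g03^2*g12^2*g23*w2^2 + 4*g01^2*g02*g03*g12*g13*g23*w2^2 - 2*g01^2*g02^2*g13^2*g23*w2^2 - 4*g01^3*g03*g12*g23^2*w2^2 + 4*g01^3*g02*g13*g23^2*w2^2 - 2*g01^4*g23^3*w2^2) * hPS + (-2*g03^2*g12^2*w2 + 2*g03^2*g12^2*w2*c2 + 2*g03^2*g12^2*w2*c1 + 4*g02*g03*g12*g13*w2 - 4*g02*g03*g12*g13*w2*c2 -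 4*g02*g03*g12*g13*w2*c1 - 2*g02^2*g13^2*w2 + 2*g02^2*g13^2*w2*c2 + 2*g02^2*g13^2*w2*c1 - 4*g01*g03*g12*g23*w2 + 4*g01*g03*g12*g23*w2*c2 + 4*g01*g03*g12*g23*w2*c1 + 4*g01*g02*g13*g23*w2 - 4*g01*g02*g13*g23*w2*c2 - 4*g01*g02*g13*g23*w2*c1 - 2*g01^2*g23^2*w2 + 2*g01^2*g23^2*w2*c2 + 2*g01^2*g23^2*w2*c1) * hq + (-1*g01^2*g03*g12^2*g23*w0*w2*D + 1*g01^2*g03*g12^2*g23*w0*w2*D*a2 + 1*g01^2*g03*g12^2*g23*w0*w2*D*a1 - 1*g01^2*g03*g12^2*g23*w0*w2*D^2 + 1*g01^2*g02*g12*g13*g23*w0*w2*D - 1*g01^2*g02*g12*g13*g23*w0*w2*D*a2 - 1*g01^2*g02*g12*g13*g23*w0*w2*D*a1 + 1*g01^2*g02*g12*g13*g23*w0*w2*D^2 + 1*g01^2*g02*g03*g12*g23*w1*w2*D - 1*g01^2*g02*g03*g12*g23*w1*w2*D*a2 - 1*g01^2*g02*g03*g12*g23*w1*w2*D*a1 +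 1*g01^2*g02*g03*g12*g23*w1*w2*D^2 - 1*g01^2*g02^2*g13*g23*w1*w2*D + 1*g01^2*g02^2*g13*g23*w1*w2*D*a2 + 1*g01^2*g02^2*g13*g23*w1*w2*D*a1 - 1*g01^2*g02^2*g13*g23*w1*w2*D^2 - 1*g01^3*g12*g23^2*w0*w2*D + 1*g01^3*g12*g23^2*w0*w2*D*a2 + 1*g01^3*g12*g23^2*w0*w2*D*a1 - 1*g01^3*g12*g23^2*w0*w2*D^2 - 1*g01^3*g03*g12*g23*w2^2*D + 1*g01^3*g03*g12*g23*w2^2*D*a2 + 1*g01^3*g03*g12*g23*w2^2*D*a1 - 1*g01^3*g03*g12*g23*w2^2*D^2 + 1*g01^3*g02*g23^2*w1*w2*D - 1*g01^3*g02*g23^2*w1*w2*D*a2 - 1*g01^3*g02*g23^2*w1*w2*D*a1 + 1*g01^3*g02*g23^2*w1*w2*D^2 + 1*g01^3*g02*g13*g23*w2^2*D - 1*g01^3*g02*g13*g23*w2^2*D*a2 - 1*g01^3*g02*g13*g23*w2^2*D*a1 + 1*g01^3*g02*g13*g23*w2^2*D^2 - 1*g01^4*g23^2*w2^2*D + 1*g01^4*g23^2*w2^2*D*a2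 + 1*g01^4*g23^2*w2^2*D*a1 - 1*g01^4*g23^2*w2^2*D^2) * hlammu + (2*g01*g03*g12*g13*g23*w0*w2*D - 2*g01*g03^2*g12*g23*w1*w2*D - 2*g01*g02*g13^2*g23*w0*w2*D + 2*g01*g02*g03*g13*g23*w1*w2*D + 2*g01^2*g13*g23^2*w0*w2*D - 2*g01^2*g03*g23^2*w1*w2*D + 2*g01^2*g03*g12*g23*w2*w3*D - 2*g01^2*g02*g13*g23*w2*w3*D + 2*g01^3*g23^2*w2*w3*D) * hlam2 + (1*g01^2*g03*g12^2*g23^2*w0*w2 - 1*g01^2*g02*g12*g13*g23^2*w0*w2 - 1*g01^2*g02*g03*g12*g23^2*w1*w2 + 1*g01^2*g02^2*g13*g23^2*w1*w2 + 1*g01^3*g12*g23^3*w0*w2 + 1*g01^3*g03*g12*g23^2*w2^2 - 1*g01^3*g02*g23^3*w1*w2 - 1*g01^3*g02*g13*g23^2*w2^2 + 1*g01^4*g23^3*w2^2) * hD2 + (-2*g01*g02*g03*g12^2*g13*g23*w0*w2 + 2*g01*g02*g03^2*g12^2*g23*w1*w2 + 2*g01*g02^2*g12*g13^2*g23*w0*w2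 - 2*g01*g02^2*g03*g12*g13*g23*w1*w2 + 1*g01^2*g03*g12^2*g23^2*w0*w2 - 1*g01^2*g03*g12^2*g23^2*w0*w2*a2 - 1*g01^2*g03*g12^2*g23^2*w0*w2*a1 - 1*g01^2*g03^2*g12^2*g23*w2^2 + 1*g01^2*g03^2*g12^2*g23*w2^2*b2 + 1*g01^2*g03^2*g12^2*g23*w2^2*b1 - 3*g01^2*g02*g12*g13*g23^2*w0*w2 + 1*g01^2*g02*g12*g13*g23^2*w0*w2*a2 + 1*g01^2*g02*g12*g13*g23^2*w0*w2*a1 + 1*g01^2*g02*g03*g12*g23^2*w1*w2 + 1*g01^2*g02*g03*g12*g23^2*w1*w2*a2 + 1*g01^2*g02*g03*g12*g23^2*w1*w2*a1 + 2*g01^2*g02*g03*g12*g13*g23*w2^2 - 2*g01^2*g02*g03*g12*g13*g23*w2^2*b2 - 2*g01^2*g02*g03*g12*g13*g23*w2^2*b1 - 2*g01^2*g02*g03*g12^2*g23*w2*w3 + 1*g01^2*g02^2*g13*g23^2*w1*w2 - 1*g01^2*g02^2*g13*g23^2*w1*w2*a2 - 1*g01^2*g02^2*g13*g23^2*w1*w2*a1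 - 1*g01^2*g02^2*g13^2*g23*w2^2 + 1*g01^2*g02^2*g13^2*g23*w2^2*b2 + 1*g01^2*g02^2*g13^2*g23*w2^2*b1 + 2*g01^2*g02^2*g12*g13*g23*w2*w3 + 1*g01^3*g12*g23^3*w0*w2 - 1*g01^3*g12*g23^3*w0*w2*a2 - 1*g01^3*g12*g23^3*w0*w2*a1 - 1*g01^3*g03*g12*g23^2*w2^2 + 2*g01^3*g03*g12*g23^2*w2^2*b2 + 2*g01^3*g03*g12*g23^2*w2^2*b1 - 1*g01^3*g03*g12*g23^2*w2^2*a2 - 1*g01^3*g03*g12*g23^2*w2^2*a1 - 1*g01^3*g02*g23^3*w1*w2 + 1*g01^3*g02*g23^3*w1*w2*a2 + 1*g01^3*g02*g23^3*w1*w2*a1 + 1*g01^3*g02*g13*g23^2*w2^2 - 2*g01^3*g02*g13*g23^2*w2^2*b2 - 2*g01^3*g02*g13*g23^2*w2^2*b1 + 1*g01^3*g02*g13*g23^2*w2^2*a2 + 1*g01^3*g02*g13*g23^2*w2^2*a1 - 2*g01^3*g02*g12*g23^2*w2*w3 + 1*g01^4*g23^3*w2^2*b2 + 1*g01^4*g23^3*w2^2*b1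 - 1*g01^4*g23^3*w2^2*a2 - 1*g01^4*g23^3*w2^2*a1) * hDL + (2*g01*g03^2*g12^2*g23*w2 - 2*g01*g03^2*g12^2*g23*w2*a2 - 2*g01*g03^2*g12^2*g23*w2*a1 - 4*g01*g02*g03*g12*g13*g23*w2 + 4*g01*g02*g03*g12*g13*g23*w2*a2 + 4*g01*g02*g03*g12*g13*g23*w2*a1 + 2*g01*g02^2*g13^2*g23*w2 - 2*g01*g02^2*g13^2*g23*w2*a2 - 2*g01*g02^2*g13^2*g23*w2*a1 + 4*g01^2*g03*g12*g23^2*w2 - 4*g01^2*g03*g12*g23^2*w2*a2 - 4*g01^2*g03*g12*g23^2*w2*a1 - 4*g01^2*g02*g13*g23^2*w2 + 4*g01^2*g02*g13*g23^2*w2*a2 + 4*g01^2*g02*g13*g23^2*w2*a1 + 2*g01^3*g23^3*w2 - 2*g01^3*g23^3*w2*a2 - 2*g01^3*g23^3*w2*a1) * hb1c + (2*g01*g03^2*g12^2*g23*w2 - 2*g01*g03^2*g12^2*g23*w2*a2 - 2*g01*g03^2*g12^2*g23*w2*a1 - 4*g01*g02*g03*g12*g13*g23*w2 + 4*g01*g02*g03*g12*g13*g23*w2*a2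 + 4*g01*g02*g03*g12*g13*g23*w2*a1 + 2*g01*g02^2*g13^2*g23*w2 - 2*g01*g02^2*g13^2*g23*w2*a2 - 2*g01*g02^2*g13^2*g23*w2*a1 + 4*g01^2*g03*g12*g23^2*w2 - 4*g01^2*g03*g12*g23^2*w2*a2 - 4*g01^2*g03*g12*g23^2*w2*a1 - 4*g01^2*g02*g13*g23^2*w2 + 4*g01^2*g02*g13*g23^2*w2*a2 + 4*g01^2*g02*g13*g23^2*w2*a1 + 2*g01^3*g23^3*w2 - 2*g01^3*g23^3*w2*a2 - 2*g01^3*g23^3*w2*a1) * hb2c + (-2*g02*g03^2*g12^3*w2 + 4*g02^2*g03*g12^2*g13*w2 - 2*g02^3*g12*g13^2*w2 - 4*g01*g02*g03*g12^2*g23*w2 + 4*g01*g02^2*g12*g13*g23*w2 - 2*g01^2*g02*g12*g23^2*w2) * hc1c + (-2*g02*g03^2*g12^3*w2 + 4*g02^2*g03*g12^2*g13*w2 - 2*g02^3*g12*g13^2*w2 - 4*g01*g02*g03*g12^2*g23*w2 + 4*g01*g02^2*g12*g13*g23*w2 - 2*g01^2*g02*g12*g23^2*w2) * hc2c + (2*g03^2*g12^3*w0*w2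 - 4*g02*g03^2*g12^2*w1*w2 - 2*g02^2*g12*g13^2*w0*w2 + 4*g02^2*g03*g12*g13*w1*w2 + 4*g01*g03*g12^2*g23*w0*w2*a2 + 2*g01*g03*g12^2*g23*w0*w2*a1 + 2*g01*g03^2*g12^2*w2^2 + 4*g01*g02*g12*g13*g23*w0*w2 - 4*g01*g02*g12*g13*g23*w0*w2*a2 - 2*g01*g02*g12*g13*g23*w0*w2*a1 - 2*g01*g02*g03*g12*g23*w1*w2 - 4*g01*g02*g03*g12*g23*w1*w2*a2 - 2*g01*g02*g03*g12*g23*w1*w2*a1 - 2*g01*g02*g03*g12*g13*w2^2 + 2*g01*g02*g03*g12^2*w2*w3 - 2*g01*g02^2*g13*g23*w1*w2 + 4*g01*g02^2*g13*g23*w1*w2*a2 + 2*g01*g02^2*g13*g23*w1*w2*a1 - 2*g01*g02^2*g12*g13*w2*w3 - 2*g01^2*g12*g23^2*w0*w2 + 4*g01^2*g12*g23^2*w0*w2*a2 + 2*g01^2*g12*g23^2*w0*w2*a1 + 4*g01^2*g03*g12*g23*w2^2*a2 + 2*g01^2*g03*g12*g23*w2^2*a1 + 2*g01^2*g02*g23^2*w1*w2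 - 4*g01^2*g02*g23^2*w1*w2*a2 - 2*g01^2*g02*g23^2*w1*w2*a1 + 2*g01^2*g02*g13*g23*w2^2 - 4*g01^2*g02*g13*g23*w2^2*a2 - 2*g01^2*g02*g13*g23*w2^2*a1 + 2*g01^2*g02*g12*g23*w2*w3 - 2*g01^3*g23^2*w2^2 + 4*g01^3*g23^2*w2^2*a2 + 2*g01^3*g23^2*w2^2*a1) * ha1c + (4*g02*g03*g12^2*g13*w0*w2 - 2*g02*g03^2*g12^2*w1*w2 - 4*g02^2*g12*g13^2*w0*w2 + 2*g02^3*g13^2*w1*w2 - 2*g01*g03*g12^2*g23*w0*w2 + 2*g01*g03*g12^2*g23*w0*w2*a2 + 6*g01*g02*g12*g13*g23*w0*w2 - 2*g01*g02*g12*g13*g23*w0*w2*a2 - 2*g01*g02*g03*g12*g23*w1*w2*a2 + 2*g01*g02*g03*g12*g13*w2^2 + 2*g01*g02*g03*g12^2*w2*w3 - 4*g01*g02^2*g13*g23*w1*w2 + 2*g01*g02^2*g13*g23*w1*w2*a2 - 2*g01*g02^2*g13^2*w2^2 - 2*g01*g02^2*g12*g13*w2*w3 - 2*g01^2*g12*g23^2*w0*w2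 + 2*g01^2*g12*g23^2*w0*w2*a2 - 2*g01^2*g03*g12*g23*w2^2 + 2*g01^2*g03*g12*g23*w2^2*a2 + 2*g01^2*g02*g23^2*w1*w2 - 2*g01^2*g02*g23^2*w1*w2*a2 + 4*g01^2*g02*g13*g23*w2^2 - 2*g01^2*g02*g13*g23*w2^2*a2 + 2*g01^2*g02*g12*g23*w2*w3 - 2*g01^3*g23^2*w2^2 + 2*g01^3*g23^2*w2^2*a2) * ha2c

/-- Pairings of the adapted basis `e′, f′` of
`⟨v₀,v₁⟩^⊥ ∩ ⟨v₀,v₁,v₂,v₃⟩` against a fifth isotropic vector `v₄`, expressed through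
the cross-ratios `α_j, β_j, γ_j` and the quantities `ψ_±`. -/
theorem statement_10 (ε : ℂ) (d : ℕ)
    (hεd : (ε = 1 ∧ d = 1) ∨ (ε = -1 ∧ d = 0) ∨ (ε = 1 ∧ d = 0))
    (r : ℕ) (hr1 : 1 ≤ r) (hr2 : ε = 1 ∧ d = 0 → 2 ≤ r)
    (sq : ℂ → ℂ) (hsq : ∀ z, sq z ^ 2 = z)
    (v0 v1 v2 v3 : Vc r d) (hp : Gen4 ε r d v0 v1 v2 v3)
    (Pi4 sPi lam mu : ℂ)
    (hPi : Pi4 = om ε r d v0 v1 * om ε r d v1 v2 * om ε r d v2 v0)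
    (hsPi : sPi ^ 2 = Pi4)
    (hlam : lam = sPi / om ε r d v1 v0)
    (hmu : mu = lam⁻¹ * om ε r d v3 v2)
    (e' f' : Vc r d)
    (he'mem : e' ∈ Submodule.span ℂ ({v0, v1, v2, v3} : Set (Vc r d)))
    (he'perp : om ε r d v0 e' = 0 ∧ om ε r d v1 e' = 0)
    (hf'mem : f' ∈ Submodule.span ℂ ({v0, v1, v2, v3} : Set (Vc r d)))
    (hf'perp : om ε r d v0 f' = 0 ∧ om ε r d v1 f' = 0)
    (he'2 : om ε r d e' v2 = lam)
    (he'3 : om ε r d e' v3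
      = mu * phiM ε sq (CR1 ε r d v0 v1 v2 v3) (CR2 ε r d v0 v1 v2 v3))
    (hf'2 : om ε r d f' v2 = -lam)
    (hf'3 : om ε r d f' v3
      = ε * mu * phiP ε sq (CR1 ε r d v0 v1 v2 v3) (CR2 ε r d v0 v1 v2 v3))
    (v4 : Vc r d) (hp5 : Conf5 ε r d v0 v1 v2 v3 v4)
    -- the cross-ratios α₁, α₂, β₁, β₂, γ₁, γ₂ of the 5-tuple
    (a1 a2 b1 b2 c1 c2 : ℂ)
    (ha1 : a1 = CR1 ε r d v0 v1 v2 v3) (ha2 : a2 = CR2 ε r d v0 v1 v2 v3)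
    (hb1 : b1 = CR1 ε r d v0 v1 v2 v4) (hb2 : b2 = CR2 ε r d v0 v1 v2 v4)
    (hc1 : c1 = CR1 ε r d v0 v1 v3 v4) (hc2 : c2 = CR2 ε r d v0 v1 v3 v4)
    -- ψ₋ and ψ₊
    (psm psp : ℂ)
    (hpsm : psm = -(phiM ε sq a1 a2) * Gam b1 b2 + (a2 * b1 / c1) * Gam c1 c2)
    (hpsp : psp = phiP ε sq a1 a2 * Gam b1 b2 + (a2 * b1 / c1) * Gam c1 c2) :
    om ε r d e' v4 = ε * (om ε r d v2 v4 / lam) * (psm / DelHalf ε sq a1 a2) ∧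
    om ε r d f' v4 = (om ε r d v2 v4 / lam) * (psp / DelHalf ε sq a1 a2) := by
  obtain ⟨hc4, hli, hnd⟩ := hp
  obtain ⟨⟨hi0ne, hi0⟩, ⟨hi1ne, hi1⟩, ⟨hi2ne, hi2⟩, ⟨hi3ne, hi3⟩, h01, h02, h03, h12, h13, h23⟩ := hc4
  obtain ⟨-, ⟨hi4ne, hi4⟩, h04, h14, h24, h34⟩ := hp5
  have hε : ε = 1 ∨ ε = -1 := by
    rcases hεd with ⟨h,-⟩|⟨h,-⟩|⟨h,-⟩
    exacts [Or.inl h, Or.inr h, Or.inl h]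
  have hsym : ∀ x y : Vc r d, om ε r d x y = ε * om ε r d y x := om_swap ε r d hεd
  have hεne : ε ≠ 0 := by rcases hε with h|h <;> rw [h] <;> norm_num
  have hε2 : ε * ε = 1 := by rcases hε with h|h <;> rw [h] <;> norm_num
  have h10 : om ε r d v1 v0 = ε * (om ε r d v0 v1) := hsym v1 v0
  have h20 : om ε r d v2 v0 = ε * (om ε r d v0 v2) := hsym v2 v0
  have h30 : om ε r d v3 v0 = ε * (om ε r d v0 v3) := hsym v3 v0
  have h21 : om ε r d v2 v1 = ε * (om ε r d v1 v2) := hsym v2 v1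
  have h31 : om ε r d v3 v1 = ε * (om ε r d v1 v3) := hsym v3 v1
  have h32 : om ε r d v3 v2 = ε * (om ε r d v2 v3) := hsym v3 v2
  have h10ne : om ε r d v1 v0 ≠ 0 := by rw [h10]; exact mul_ne_zero hεne h01
  have hPine : Pi4 ≠ 0 := by
    rw [hPi, h20]
    exact mul_ne_zero (mul_ne_zero h01 h12) (mul_ne_zero hεne h02)
  have hsPine : sPi ≠ 0 := by
    intro h; apply hPine; rw [← hsPi, h]; ring
  have hlamne : lam ≠ 0 := by rw [hlam]; exact div_ne_zero hsPine h10ne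
  have hlam1 : lam * om ε r d v1 v0 = sPi := by rw [hlam]; exact div_mul_cancel₀ _ h10ne
  have hlam2 : lam*lam*(om ε r d v0 v1) = ε*(om ε r d v0 v2)*(om ε r d v1 v2) := by
    apply mul_left_cancel₀ h01
    have h2 : (lam * om ε r d v1 v0)*(lam * om ε r d v1 v0)
        = (om ε r d v0 v1)*(om ε r d v1 v2)*(ε*(om ε r d v0 v2)) := by
      rw [hlam1, ← h20]; linear_combination hsPi + hPi
    rw [h10] at h2
    linear_combination h2 - lam*lam*(om ε r d v0 v1)*(om ε r d v0 v1)*hε2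
  have hlammu : lam*mu = ε*(om ε r d v2 v3) := by
    rw [hmu, h32, mul_inv_cancel_left₀ hlamne]
  have ha1v : a1 = (ε*(om ε r d v0 v1)*(om ε r d v2 v3)/((om ε r d v1 v3)*(ε*(om ε r d v0 v2))))⁻¹ := by
    rw [ha1]; unfold CR1 CR0; rw [h10, h20]
  have ha2v : a2 = ε*(om ε r d v1 v2)*(om ε r d v0 v3)/((om ε r d v2 v3)*(om ε r d v0 v1)) := by
    rw [ha2]; unfold CR2 CR0; rw [h21]
  have hb1v : b1 = (ε*(om ε r d v0 v1)*(om ε r d v2 v4)/((om ε r d v1 v4)*(ε*(om ε r d v0 v2))))⁻¹ := by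
    rw [hb1]; unfold CR1 CR0; rw [h10, h20]
  have hb2v : b2 = ε*(om ε r d v1 v2)*(om ε r d v0 v4)/((om ε r d v2 v4)*(om ε r d v0 v1)) := by
    rw [hb2]; unfold CR2 CR0; rw [h21]
  have hc1v : c1 = (ε*(om ε r d v0 v1)*(om ε r d v3 v4)/((om ε r d v1 v4)*(ε*(om ε r d v0 v3))))⁻¹ := by
    rw [hc1]; unfold CR1 CR0; rw [h10, h30]
  have hc2v : c2 = ε*(om ε r d v1 v3)*(om ε r d v0 v4)/((om ε r d v3 v4)*(om ε r d v0 v1)) := by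
    rw [hc2]; unfold CR2 CR0; rw [h31]
  have hD2 : (DelHalf ε sq a1 a2)^2 = (1 - a1 - a2)^2 - 2*(1+ε)*(a1*a2) := by
    rcases hε with h|h
    · subst h
      simp only [DelHalf, if_neg (show (1:ℂ) ≠ -1 by norm_num)]
      rw [hsq]; unfold Del Gam; ring
    · subst h
      simp only [DelHalf, Gam, eq_self_iff_true, if_true]; ring
  have hDlin : ε = -1 → DelHalf ε sq a1 a2 = 1 - a1 - a2 := by
    intro h; subst h; simp only [DelHalf, Gam, eq_self_iff_true, if_true]
  have hdN : (-(ε*((om ε r d v0 v1)*(om ε r d v0 v3)*(om ε r d v1 v2)*(om ε r d v2 v3))) + ε^2*((om ε r d v0 v3)^2*(om ε r d v1 v2)^2 - 2*(om ε r d v0 v2)*(om ε r d v0 v3)*(om ε r d v1 v2)*(om ε r d v1 v3) + (om ε r d v0 v2)^2*(om ε r d v1 v3)^2 - 2*(om ε r d v0 v1)*(om ε r d v0 v2)*(om ε r d v1 v3)*(om ε r d v2 v3) + (om ε r d v0 v1)^2*(om ε r d v2 v3)^2) - ε^3*((om ε r d v0 v1)*(om ε r d v0 v3)*(om ε r d v1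 v2)*(om ε r d v2 v3))) ≠ 0 := by
    intro hdet0
    have hdet : (!![(0:ℂ), (om ε r d v0 v1), (om ε r d v0 v2), (om ε r d v0 v3);
        ε*(om ε r d v0 v1), 0, (om ε r d v1 v2), (om ε r d v1 v3);
        ε*(om ε r d v0 v2), ε*(om ε r d v1 v2), 0, (om ε r d v2 v3);
        ε*(om ε r d v0 v3), ε*(om ε r d v1 v3), ε*(om ε r d v2 v3), 0]).det = (-(ε*((om ε r d v0 v1)*(om ε r d v0 v3)*(om ε r d v1 v2)*(om ε r d v2 v3))) + ε^2*((om ε r d v0 v3)^2*(om ε r d v1 v2)^2 - 2*(om ε r d v0 v2)*(om ε r d v0 v3)*(om ε r d v1 v2)*(om ε r d v1 v3) + (om ε r d v0 v2)^2*(om ε r d v1 v3)^2 - 2*(om ε r d v0 v1)*(om ε r d v0 v2)*(om ε r d v1 v3)*(om ε r d v2 v3) + (om ε r d v0 v1)^2*(om ε r d v2 v3)^2) - ε^3*((om ε r d v0 v1)*(om ε r d v0 v3)*(om ε r d v1 v2)*(om ε r d v2 v3))) := by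
      rw [Matrix.det_succ_row_zero]
      simp [Fin.sum_univ_succ, Matrix.det_fin_three, Fin.succAbove]
      ring
    obtain ⟨y, hyne, hy0⟩ : ∃ y, y ≠ 0 ∧ (!![(0:ℂ), (om ε r d v0 v1), (om ε r d v0 v2), (om ε r d v0 v3);
        ε*(om ε r d v0 v1), 0, (om ε r d v1 v2), (om ε r d v1 v3);
        ε*(om ε r d v0 v2), ε*(om ε r d v1 v2), 0, (om ε r d v2 v3);
        ε*(om ε r d v0 v3), ε*(om ε r d v1 v3), ε*(om ε r d v2 v3), 0]).mulVec y = 0 :=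
      Matrix.exists_mulVec_eq_zero_iff.mpr (by rw [hdet]; exact hdet0)
    have e0 := congrFun hy0 0
    have e1 := congrFun hy0 1
    have e2 := congrFun hy0 2
    have e3 := congrFun hy0 3
    simp [Matrix.mulVec, dotProduct, Fin.sum_univ_four] at e0 e1 e2 e3
    have hexpu : ∀ z, om ε r d (y 0 • v0 + (y 1 • v1 + (y 2 • v2 + y 3 • v3))) z
        = y 0 * om ε r d v0 z + (y 1 * om ε r d v1 z + (y 2 * om ε r d v2 z + y 3 * om ε r d v3 z)) := by
      intro z
      rw [om_add_left, om_smul_left, om_add_left, om_smul_left, om_add_left, om_smul_left, om_smul_left]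
    have hz0 : om ε r d (y 0 • v0 + (y 1 • v1 + (y 2 • v2 + y 3 • v3))) v0 = 0 := by
      rw [hexpu v0, hi0, h10, h20, h30]; linear_combination ε*e0 - (y 0 * 0)*hε2
    have hz1 : om ε r d (y 0 • v0 + (y 1 • v1 + (y 2 • v2 + y 3 • v3))) v1 = 0 := by
      rw [hexpu v1, hi1, h21, h31]; linear_combination ε*e1 - (y 0 * (om ε r d v0 v1))*hε2
    have hz2 : om ε r d (y 0 • v0 + (y 1 • v1 + (y 2 • v2 + y 3 • v3))) v2 = 0 := by
      rw [hexpu v2, hi2, h32]; linear_combination ε*e2 - (y 0 * (om ε r d v0 v2) + y 1 * (om ε r d v1 v2))*hε2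
    have hz3 : om ε r d (y 0 • v0 + (y 1 • v1 + (y 2 • v2 + y 3 • v3))) v3 = 0 := by
      rw [hexpu v3, hi3]; linear_combination ε*e3 - (y 0 * (om ε r d v0 v3) + y 1 * (om ε r d v1 v3) + y 2 * (om ε r d v2 v3))*hε2
    have humem : (y 0 • v0 + (y 1 • v1 + (y 2 • v2 + y 3 • v3))) ∈
        Submodule.span ℂ ({v0, v1, v2, v3} : Set (Vc r d)) := by
      refine Submodule.add_mem _ (Submodule.smul_mem _ _ (Submodule.subset_span (by simp)))
        (Submodule.add_mem _ (Submodule.smul_mem _ _ (Submodule.subset_span (by simp)))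
          (Submodule.add_mem _ (Submodule.smul_mem _ _ (Submodule.subset_span (by simp)))
            (Submodule.smul_mem _ _ (Submodule.subset_span (by simp)))))
    have hu0 : y 0 • v0 + (y 1 • v1 + (y 2 • v2 + y 3 • v3)) = 0 := by
      refine hnd _ humem (fun z hz => ?_)
      obtain ⟨z0, z1, z2, z3, rfl⟩ := mem_span_quad hz
      rw [om_add_right, om_smul_right, om_add_right, om_smul_right, om_add_right,
        om_smul_right, om_smul_right, hz0, hz1, hz2, hz3]
      ring
    have hsum : ∑ i : Fin 4, y i • ![v0, v1, v2, v3] i = 0 := by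
      rw [Fin.sum_univ_four]
      simp only [Matrix.cons_val_zero, Matrix.cons_val_one, Matrix.head_cons,
        Matrix.cons_val_two, Matrix.tail_cons, Matrix.cons_val_three]
      rw [add_assoc, add_assoc]
      exact hu0
    have hall := Fintype.linearIndependent_iff.mp hli y hsum
    exact hyne (funext fun i => hall i)
  obtain ⟨k0, k1, k2, k3, hrep⟩ := mem_span_quad he'mem
  obtain ⟨l0, l1, l2, l3, hrepf⟩ := mem_span_quad hf'mem
  have hexp : ∀ z, om ε r d e' z
      = k0 * om ε r d v0 z + (k1 * om ε r d v1 z + (k2 * om ε r d v2 z + k3 * om ε r d v3 z)) := by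
    intro z
    rw [hrep, om_add_left, om_smul_left, om_add_left, om_smul_left, om_add_left, om_smul_left, om_smul_left]
  have hexpf : ∀ z, om ε r d f' z
      = l0 * om ε r d v0 z + (l1 * om ε r d v1 z + (l2 * om ε r d v2 z + l3 * om ε r d v3 z)) := by
    intro z
    rw [hrepf, om_add_left, om_smul_left, om_add_left, om_smul_left, om_add_left, om_smul_left, om_smul_left]
  have hpe0 : om ε r d e' v0 = 0 := by rw [hsym e' v0, he'perp.1, mul_zero]
  have hpe1 : om ε r d e' v1 = 0 := by rw [hsym e' v1, he'perp.2, mul_zero]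
  have hpf0 : om ε r d f' v0 = 0 := by rw [hsym f' v0, hf'perp.1, mul_zero]
  have hpf1 : om ε r d f' v1 = 0 := by rw [hsym f' v1, hf'perp.2, mul_zero]
  have hE0 : k0*0 + k1*(ε*(om ε r d v0 v1)) + k2*(ε*(om ε r d v0 v2)) + k3*(ε*(om ε r d v0 v3)) = 0 := by
    have h := hexp v0; rw [hi0, h10, h20, h30, hpe0] at h; linear_combination -h
  have hE1 : k0*(om ε r d v0 v1) + k1*0 + k2*(ε*(om ε r d v1 v2)) + k3*(ε*(om ε r d v1 v3)) = 0 := by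
    have h := hexp v1; rw [hi1, h21, h31, hpe1] at h; linear_combination -h
  have hE2 : k0*(om ε r d v0 v2) + k1*(om ε r d v1 v2) + k2*0 + k3*(ε*(om ε r d v2 v3)) = lam := by
    have h := hexp v2; rw [hi2, h32, he'2] at h; linear_combination -h
  have hE3 : k0*(om ε r d v0 v3) + k1*(om ε r d v1 v3) + k2*(om ε r d v2 v3) + k3*0 = om ε r d e' v3 := by
    have h := hexp v3; rw [hi3] at h; linear_combination -h
  have hSe : om ε r d e' v4 = k0*(om ε r d v0 v4) + k1*(om ε r d v1 v4) + k2*(om ε r d v2 v4) + k3*(om ε r d v3 v4) := by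
    have h := hexp v4; linear_combination h
  have hF0 : l0*0 + l1*(ε*(om ε r d v0 v1)) + l2*(ε*(om ε r d v0 v2)) + l3*(ε*(om ε r d v0 v3)) = 0 := by
    have h := hexpf v0; rw [hi0, h10, h20, h30, hpf0] at h; linear_combination -h
  have hF1 : l0*(om ε r d v0 v1) + l1*0 + l2*(ε*(om ε r d v1 v2)) + l3*(ε*(om ε r d v1 v3)) = 0 := by
    have h := hexpf v1; rw [hi1, h21, h31, hpf1] at h; linear_combination -h
  have hF2 : l0*(om ε r d v0 v2) + l1*(om ε r d v1 v2) + l2*0 + l3*(ε*(om ε r d v2 v3)) = -lam := by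
    have h := hexpf v2; rw [hi2, h32, hf'2] at h; linear_combination -h
  have hF3 : l0*(om ε r d v0 v3) + l1*(om ε r d v1 v3) + l2*(om ε r d v2 v3) + l3*0 = om ε r d f' v3 := by
    have h := hexpf v3; rw [hi3] at h; linear_combination -h
  have hSf : om ε r d f' v4 = l0*(om ε r d v0 v4) + l1*(om ε r d v1 v4) + l2*(om ε r d v2 v4) + l3*(om ε r d v3 v4) := by
    have h := hexpf v4; linear_combination h
  have hT3e : om ε r d e' v3 = mu * ((DelHalf ε sq a1 a2 - (1 - a1 - a2))/2) := by
    rw [he'3, ← ha1, ← ha2]; rfl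
  have hT3f : om ε r d f' v3 = ε*mu * ((DelHalf ε sq a1 a2 + (1 - a1 - a2))/2) := by
    rw [hf'3, ← ha1, ← ha2]; rfl
  have hPSm : psm = -((DelHalf ε sq a1 a2 - (1 - a1 - a2))/2)*(1 - b1 - b2) + (a2*b1/c1)*(1 - c1 - c2) := by
    rw [hpsm]; rfl
  have hPSp : psp = ((DelHalf ε sq a1 a2 + (1 - a1 - a2))/2)*(1 - b1 - b2) + (a2*b1/c1)*(1 - c1 - c2) := by
    rw [hpsp]; rfl
  constructor
  · exact main_alg_e ε (om ε r d v0 v1) (om ε r d v0 v2) (om ε r d v0 v3) (om ε r d v1 v2) (om ε r d v1 v3) (om ε r d v2 v3) (om ε r d v0 v4) (om ε r d v1 v4) (om ε r d v2 v4) (om ε r d v3 v4)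
      lam mu (DelHalf ε sq a1 a2) a1 a2 b1 b2 c1 c2 (om ε r d e' v3) psm (om ε r d e' v4)
      k0 k1 k2 k3 hε h01 h02 h03 h12 h13 h23 h14 h24 h34 hdN hlamne hlam2 hlammu
      ha1v ha2v hb1v hb2v hc1v hc2v hD2 hDlin hE0 hE1 hE2 hE3 hT3e hPSm hSe
  · exact main_alg_f ε (om ε r d v0 v1) (om ε r d v0 v2) (om ε r d v0 v3) (om ε r d v1 v2) (om ε r d v1 v3) (om ε r d v2 v3) (om ε r d v0 v4) (om ε r d v1 v4) (om ε r d v2 v4) (om ε r d v3 v4)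
      lam mu (DelHalf ε sq a1 a2) a1 a2 b1 b2 c1 c2 (om ε r d f' v3) psp (om ε r d f' v4)
      l0 l1 l2 l3 hε h01 h02 h03 h12 h13 h23 h14 h24 h34 hdN hlamne hlam2 hlammu
      ha1v ha2v hb1v hb2v hc1v hc2v hD2 hDlin hF0 hF1 hF2 hF3 hT3f hPSp hSf
end DCM
end
end

section
/- Fix (ε,d) ∈ {(1,1),(−1,0),(1,0)} and let r ≥ 2. For (a₁,a₂) ∈ Ω₃ set φ₂ = e_r + e_{r−1} − f_{r−1} + f_r and φ₃ = a₁·e_r + φ₋(a₁,a₂)·e_{r−1} + ε·φ₊(a₁,a₂)·f_{r−1} + ε·a₂·f_r. Then: φ₂ and φ₃ are isotropic; ω(e_r,f_r) = 1, ω(e_r,φ₂) = 1, ω(e_r,φ₃) = ε·a₂, ω(f_r,φ₂) = ε, ω(f_r,φ₃) = ε·a₁, ω(φ₂,φ₃) = ε; the 4-tuple Φ₃(a₁,a₂) = ([e_r],[f_r],[φ₂],[φ₃]) lies in P_r^{{4}}; and CR₁(Φ₃(a₁,a₂)) = a₁ and CR₂(Φ₃(a₁,a₂)) = a₂. -/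
noncomputable section

open scoped Classical

namespace DCM

lemma combo_apply (r d : ℕ) (hr : 2 ≤ r) (a₁ a₂ a₃ a₄ : ℂ) (k : ℕ) (hk : k < 2*r+d) :
    (a₁ • eV r d r + a₂ • eV r d (r-1) + a₃ • fV r d (r-1) + a₄ • fV r d r) ⟨k, hk⟩
    = if k = 0 then a₁ else if k = 1 then a₂ else if k = 2*r+d-2 then a₃
      else if k = 2*r+d-1 then a₄ else 0 := by
  simp only [Pi.add_apply, Pi.smul_apply, smul_eq_mul, eV, fV, Fin.val_mk]
  split_ifs <;> first | omega | ring

lemma om_combo (ε : ℂ) (r d : ℕ) (hr : 2 ≤ r) (a₁ a₂ a₃ a₄ b₁ b₂ b₃ b₄ : ℂ) :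
    om ε r d (a₁ • eV r d r + a₂ • eV r d (r-1) + a₃ • fV r d (r-1) + a₄ • fV r d r)
      (b₁ • eV r d r + b₂ • eV r d (r-1) + b₃ • fV r d (r-1) + b₄ • fV r d r)
    = a₁*b₄ + a₂*b₃ + ε*(a₃*b₂ + a₄*b₁) := by
  have h1 : ¬(2*r+d-2 = 0) := by omega
  have h2 : ¬(2*r+d-2 = 1) := by omega
  have h3 : ¬(2*r+d-1 = 0) := by omega
  have h4 : ¬(2*r+d-1 = 1) := by omega
  have h5 : ¬(2*r+d-1 = 2*r+d-2) := by omega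
  unfold om
  have hmid : (if hd : d = 1 then
      (a₁ • eV r d r + a₂ • eV r d (r-1) + a₃ • fV r d (r-1) + a₄ • fV r d r) ⟨r, by omega⟩ *
      (b₁ • eV r d r + b₂ • eV r d (r-1) + b₃ • fV r d (r-1) + b₄ • fV r d r) ⟨r, by omega⟩
    else 0) = 0 := by
    split_ifs with hd
    · have hr0 : ¬(r = 0) := by omega
      have hr1 : ¬(r = 1) := by omega
      have hr2 : ¬(r = 2*r+d-2) := by omega
      have hr3 : ¬(r = 2*r+d-1) := by omega
      simp [combo_apply r d hr, hr0, hr1, hr2, hr3]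
    · rfl
  rw [hmid]
  rw [← Finset.sum_subset (Finset.subset_univ
      ({(⟨r-2, by omega⟩ : Fin r), ⟨r-1, by omega⟩} : Finset (Fin r))) ?_]
  · rw [Finset.sum_insert (by
      simp only [Finset.mem_singleton, Fin.ext_iff, Fin.val_mk]; omega),
      Finset.sum_singleton]
    have i1 : r - 1 - (r-2) = 1 := by omega
    have i2 : r - 1 - (r-1) = 0 := by omega
    have i3 : r + d + (r-2) = 2*r+d-2 := by omega
    have i4 : r + d + (r-1) = 2*r+d-1 := by omega
    simp only [combo_apply r d hr, Fin.val_mk, i1, i2, i3, i4]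
    simp [h1, h2, h3, h4, h5]
    ring
  · intro j _ hj
    simp only [Finset.mem_insert, Finset.mem_singleton, Fin.ext_iff, Fin.val_mk] at hj
    push_neg at hj
    have hjlt := j.isLt
    have j1 : ¬(r - 1 - (j:ℕ) = 0) := by omega
    have j2 : ¬(r - 1 - (j:ℕ) = 1) := by omega
    have j3 : ¬(r - 1 - (j:ℕ) = 2*r+d-2) := by omega
    have j4 : ¬(r - 1 - (j:ℕ) = 2*r+d-1) := by omega
    have j5 : ¬(r + d + (j:ℕ) = 0) := by omega
    have j6 : ¬(r + d + (j:ℕ) = 1) := by omega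
    have j7 : ¬(r + d + (j:ℕ) = 2*r+d-2) := by omega
    have j8 : ¬(r + d + (j:ℕ) = 2*r+d-1) := by omega
    simp [combo_apply r d hr, j1, j2, j3, j4, j5, j6, j7, j8]

lemma om_zero_left (ε : ℂ) (r d : ℕ) (v : Vc r d) : om ε r d 0 v = 0 := by
  simp [om]

lemma om_zero_right (ε : ℂ) (r d : ℕ) (v : Vc r d) : om ε r d v 0 = 0 := by
  simp [om]

lemma combo_eq_zero (r d : ℕ) (hr : 2 ≤ r) (a₁ a₂ a₃ a₄ : ℂ)
    (h : a₁ • eV r d r + a₂ • eV r d (r-1) + a₃ • fV r d (r-1) + a₄ • fV r d r = 0) :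
    a₁ = 0 ∧ a₂ = 0 ∧ a₃ = 0 ∧ a₄ = 0 := by
  have h0 := congrFun h ⟨0, by omega⟩
  have h1 := congrFun h ⟨1, by omega⟩
  have h2 := congrFun h ⟨2*r+d-2, by omega⟩
  have h3 := congrFun h ⟨2*r+d-1, by omega⟩
  rw [combo_apply r d hr] at h0 h1 h2 h3
  simp only [Pi.zero_apply] at h0 h1 h2 h3
  rw [if_pos trivial] at h0
  rw [if_neg (by omega), if_pos trivial] at h1
  rw [if_neg (by omega), if_neg (by omega), if_pos trivial] at h2
  rw [if_neg (by omega), if_neg (by omega), if_neg (by omega), if_pos trivial] at h3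
  exact ⟨h0, h1, h2, h3⟩

/-- For `r ≥ 2` and `(a₁,a₂) ∈ Ω₃`, the tuple
`Φ₃(a₁,a₂) = ([e_r],[f_r],[φ₂],[φ₃])` lies in `P_r^{{4}}`, with the listed values of ω on
pairs, and has `CR₁ = a₁`, `CR₂ = a₂`. -/
theorem statement_11 (ε : ℂ) (d : ℕ)
    (hεd : (ε = 1 ∧ d = 1) ∨ (ε = -1 ∧ d = 0) ∨ (ε = 1 ∧ d = 0))
    (r : ℕ) (hr : 2 ≤ r)
    (sq : ℂ → ℂ) (hsq : ∀ z, sq z ^ 2 = z)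
    (a1 a2 : ℂ) (ha1 : a1 ≠ 0) (ha2 : a2 ≠ 0) (hDel : Del ε a1 a2 ≠ 0)
    (φ2 φ3 : Vc r d)
    (hφ2 : φ2 = eV r d r + eV r d (r - 1) - fV r d (r - 1) + fV r d r)
    (hφ3 : φ3 = a1 • eV r d r + phiM ε sq a1 a2 • eV r d (r - 1) +
      (ε * phiP ε sq a1 a2) • fV r d (r - 1) + (ε * a2) • fV r d r) :
    -- φ₂ and φ₃ are isotropic
    IsoV ε r d φ2 ∧ IsoV ε r d φ3 ∧
    -- values of ω on pairs
    om ε r d (eV r d r) (fV r d r) = 1 ∧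
    om ε r d (eV r d r) φ2 = 1 ∧
    om ε r d (eV r d r) φ3 = ε * a2 ∧
    om ε r d (fV r d r) φ2 = ε ∧
    om ε r d (fV r d r) φ3 = ε * a1 ∧
    om ε r d φ2 φ3 = ε ∧
    -- Φ₃(a₁,a₂) ∈ P_r^{{4}}
    Gen4 ε r d (eV r d r) (fV r d r) φ2 φ3 ∧
    -- cross-ratios
    CR1 ε r d (eV r d r) (fV r d r) φ2 φ3 = a1 ∧
    CR2 ε r d (eV r d r) (fV r d r) φ2 φ3 = a2 := by
  have hε2 : ε = 1 ∨ ε = -1 := by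
    rcases hεd with ⟨h, -⟩ | ⟨h, -⟩ | ⟨h, -⟩
    exacts [Or.inl h, Or.inr h, Or.inl h]
  have hεε : ε * ε = 1 := by rcases hε2 with h | h <;> rw [h] <;> norm_num
  have hε0 : ε ≠ 0 := by rcases hε2 with h | h <;> rw [h] <;> norm_num
  have hεa2 : ε * a2 ≠ 0 := mul_ne_zero hε0 ha2
  have hεa1 : ε * a1 ≠ 0 := mul_ne_zero hε0 ha1
  have hDH : DelHalf ε sq a1 a2 ^ 2 = Del ε a1 a2 := by
    rcases hε2 with h | h
    · rw [DelHalf, if_neg (by rw [h]; norm_num)]; exact hsq _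
    · rw [DelHalf, if_pos h, Del, h]; ring
  have hK : ε * phiP ε sq a1 a2 + phiM ε sq a1 a2 ≠ 0 := by
    rcases hε2 with h | h
    · have hD : DelHalf ε sq a1 a2 ≠ 0 := by
        intro h0; apply hDel; rw [← hDH, h0]; ring
      have e : ε * phiP ε sq a1 a2 + phiM ε sq a1 a2 = DelHalf ε sq a1 a2 := by
        rw [h, phiP, phiM]; ring
      rw [e]; exact hD
    · have hG : Gam a1 a2 ≠ 0 := by
        intro h0; apply hDel; rw [Del, h0, h]; ring
      have e : ε * phiP ε sq a1 a2 + phiM ε sq a1 a2 = -Gam a1 a2 := by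
        rw [h, phiP, phiM, DelHalf, if_pos rfl]; ring
      rw [e]; exact neg_ne_zero.mpr hG
  have key := om_combo ε r d hr
  have hE1 : eV r d r = (1:ℂ) • eV r d r + (0:ℂ) • eV r d (r-1) + (0:ℂ) • fV r d (r-1) +
      (0:ℂ) • fV r d r := by module
  have hF1 : fV r d r = (0:ℂ) • eV r d r + (0:ℂ) • eV r d (r-1) + (0:ℂ) • fV r d (r-1) +
      (1:ℂ) • fV r d r := by module
  have hφ2' : φ2 = (1:ℂ) • eV r d r + (1:ℂ) • eV r d (r-1) + (-1:ℂ) • fV r d (r-1) +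
      (1:ℂ) • fV r d r := by rw [hφ2]; module
  have hφ3' := hφ3
  have oEF : om ε r d (eV r d r) (fV r d r) = 1 := by
    have h := key 1 0 0 0 0 0 0 1; rw [← hE1, ← hF1] at h; rw [h]; ring
  have oFE : om ε r d (fV r d r) (eV r d r) = ε := by
    have h := key 0 0 0 1 1 0 0 0; rw [← hE1, ← hF1] at h; rw [h]; ring
  have oEE : om ε r d (eV r d r) (eV r d r) = 0 := by
    have h := key 1 0 0 0 1 0 0 0; rw [← hE1] at h; rw [h]; ring
  have oFF : om ε r d (fV r d r) (fV r d r) = 0 := by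
    have h := key 0 0 0 1 0 0 0 1; rw [← hF1] at h; rw [h]; ring
  have oE2 : om ε r d (eV r d r) φ2 = 1 := by
    have h := key 1 0 0 0 1 1 (-1) 1; rw [← hE1, ← hφ2'] at h; rw [h]; ring
  have o2E : om ε r d φ2 (eV r d r) = ε := by
    have h := key 1 1 (-1) 1 1 0 0 0; rw [← hE1, ← hφ2'] at h; rw [h]; ring
  have oE3 : om ε r d (eV r d r) φ3 = ε * a2 := by
    have h := key 1 0 0 0 a1 (phiM ε sq a1 a2) (ε * phiP ε sq a1 a2) (ε * a2)
    rw [← hE1, ← hφ3'] at h; rw [h]; ring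
  have oF2 : om ε r d (fV r d r) φ2 = ε := by
    have h := key 0 0 0 1 1 1 (-1) 1; rw [← hF1, ← hφ2'] at h; rw [h]; ring
  have o2F : om ε r d φ2 (fV r d r) = 1 := by
    have h := key 1 1 (-1) 1 0 0 0 1; rw [← hF1, ← hφ2'] at h; rw [h]; ring
  have oF3 : om ε r d (fV r d r) φ3 = ε * a1 := by
    have h := key 0 0 0 1 a1 (phiM ε sq a1 a2) (ε * phiP ε sq a1 a2) (ε * a2)
    rw [← hF1, ← hφ3'] at h; rw [h]; ring
  have o22 : om ε r d φ2 φ2 = 0 := by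
    have h := key 1 1 (-1) 1 1 1 (-1) 1; rw [← hφ2'] at h; rw [h]; ring
  have o23 : om ε r d φ2 φ3 = ε := by
    have h := key 1 1 (-1) 1 a1 (phiM ε sq a1 a2) (ε * phiP ε sq a1 a2) (ε * a2)
    rw [← hφ2', ← hφ3'] at h; rw [h, phiP, phiM, Gam]; ring
  have o33 : om ε r d φ3 φ3 = 0 := by
    have h := key a1 (phiM ε sq a1 a2) (ε * phiP ε sq a1 a2) (ε * a2)
      a1 (phiM ε sq a1 a2) (ε * phiP ε sq a1 a2) (ε * a2)
    rw [← hφ3'] at h; rw [h]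
    rcases hε2 with hε | hε
    · rw [hε] at hDH ⊢
      simp only [phiP, phiM, Del, Gam] at hDH ⊢
      linear_combination (1/2) * hDH
    · rw [hε]; ring
  have hE1ne : eV r d r ≠ 0 := by
    intro h0; have := oEF; rw [h0, om_zero_left] at this; exact one_ne_zero this.symm
  have hF1ne : fV r d r ≠ 0 := by
    intro h0; have := oEF; rw [h0, om_zero_right] at this; exact one_ne_zero this.symm
  have h2ne : φ2 ≠ 0 := by
    intro h0; have := oE2; rw [h0, om_zero_right] at this; exact one_ne_zero this.symm
  have h3ne : φ3 ≠ 0 := by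
    intro h0; have := oE3; rw [h0, om_zero_right] at this; exact hεa2 this.symm
  have hconf : Conf4 ε r d (eV r d r) (fV r d r) φ2 φ3 :=
    ⟨⟨hE1ne, oEE⟩, ⟨hF1ne, oFF⟩, ⟨h2ne, o22⟩, ⟨h3ne, o33⟩,
      by rw [oEF]; exact one_ne_zero, by rw [oE2]; exact one_ne_zero,
      by rw [oE3]; exact hεa2, by rw [oF2]; exact hε0,
      by rw [oF3]; exact hεa1, by rw [o23]; exact hε0⟩
  have hli : LinearIndependent ℂ ![eV r d r, fV r d r, φ2, φ3] := by
    rw [Fintype.linearIndependent_iff]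
    intro g hg
    have hg4 : g 0 • eV r d r + g 1 • fV r d r + g 2 • φ2 + g 3 • φ3 = 0 := by
      rw [Fin.sum_univ_four] at hg
      simpa using hg
    have hgc : (g 0 + g 2 + g 3 * a1) • eV r d r +
        (g 2 + g 3 * phiM ε sq a1 a2) • eV r d (r-1) +
        (-(g 2) + g 3 * (ε * phiP ε sq a1 a2)) • fV r d (r-1) +
        (g 1 + g 2 + g 3 * (ε * a2)) • fV r d r = 0 := by
      rw [← hg4, hφ2', hφ3']; module
    obtain ⟨hc1, hc2, hc3, hc4⟩ := combo_eq_zero r d hr _ _ _ _ hgc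
    have hg3m : g 3 * (ε * phiP ε sq a1 a2 + phiM ε sq a1 a2) = 0 := by
      linear_combination hc2 + hc3
    have hg3 : g 3 = 0 := by
      rcases mul_eq_zero.mp hg3m with h | h
      · exact h
      · exact absurd h hK
    have hg2 : g 2 = 0 := by linear_combination hc2 - phiM ε sq a1 a2 * hg3
    have hg0 : g 0 = 0 := by linear_combination hc1 - hg2 - a1 * hg3
    have hg1 : g 1 = 0 := by linear_combination hc4 - hg2 - (ε * a2) * hg3
    intro i
    fin_cases i
    · exact hg0
    · exact hg1
    · exact hg2
    · exact hg3
  have hnd : NondegOn ε r d {eV r d r, fV r d r, φ2, φ3} := by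
    intro x hx hall
    rw [Submodule.mem_span_insert] at hx
    obtain ⟨c0, y0, hy0, rfl⟩ := hx
    rw [Submodule.mem_span_insert] at hy0
    obtain ⟨c1, y1, hy1, rfl⟩ := hy0
    rw [Submodule.mem_span_insert] at hy1
    obtain ⟨c2, y2, hy2, rfl⟩ := hy1
    rw [Submodule.mem_span_singleton] at hy2
    obtain ⟨c3, rfl⟩ := hy2
    have hxc : c0 • eV r d r + (c1 • fV r d r + (c2 • φ2 + c3 • φ3)) =
        (c0 + c2 + c3 * a1) • eV r d r + (c2 + c3 * phiM ε sq a1 a2) • eV r d (r-1) +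
        (-c2 + c3 * (ε * phiP ε sq a1 a2)) • fV r d (r-1) +
        (c1 + c2 + c3 * (ε * a2)) • fV r d r := by
      rw [hφ2', hφ3']; module
    have m0 := hall (eV r d r) (Submodule.subset_span (by simp))
    have m1 := hall (fV r d r) (Submodule.subset_span (by simp))
    have m2 := hall φ2 (Submodule.subset_span (by simp))
    have m3 := hall φ3 (Submodule.subset_span (by simp))
    have k0 := key (c0 + c2 + c3 * a1) (c2 + c3 * phiM ε sq a1 a2)
      (-c2 + c3 * (ε * phiP ε sq a1 a2)) (c1 + c2 + c3 * (ε * a2)) 1 0 0 0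
    rw [← hxc, ← hE1] at k0
    rw [k0] at m0
    have k1 := key (c0 + c2 + c3 * a1) (c2 + c3 * phiM ε sq a1 a2)
      (-c2 + c3 * (ε * phiP ε sq a1 a2)) (c1 + c2 + c3 * (ε * a2)) 0 0 0 1
    rw [← hxc, ← hF1] at k1
    rw [k1] at m1
    have k2 := key (c0 + c2 + c3 * a1) (c2 + c3 * phiM ε sq a1 a2)
      (-c2 + c3 * (ε * phiP ε sq a1 a2)) (c1 + c2 + c3 * (ε * a2)) 1 1 (-1) 1
    rw [← hxc, ← hφ2'] at k2
    rw [k2] at m2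
    have k3 := key (c0 + c2 + c3 * a1) (c2 + c3 * phiM ε sq a1 a2)
      (-c2 + c3 * (ε * phiP ε sq a1 a2)) (c1 + c2 + c3 * (ε * a2))
      a1 (phiM ε sq a1 a2) (ε * phiP ε sq a1 a2) (ε * a2)
    rw [← hxc, ← hφ3'] at k3
    rw [k3] at m3
    have hC1 : c0 + c2 + c3 * a1 = 0 := by linear_combination m1
    have hC4 : c1 + c2 + c3 * (ε * a2) = 0 := by
      have h' : ε * (c1 + c2 + c3 * (ε * a2)) = 0 := by linear_combination m0
      rcases mul_eq_zero.mp h' with h | h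
      · exact absurd h hε0
      · exact h
    have hu23 : -(c2 + c3 * phiM ε sq a1 a2) + ε * (-c2 + c3 * (ε * phiP ε sq a1 a2)) = 0 := by
      linear_combination m2 - hC1 - ε * hC4
    have hA : (c2 + c3 * phiM ε sq a1 a2) * phiP ε sq a1 a2 +
        (-c2 + c3 * (ε * phiP ε sq a1 a2)) * phiM ε sq a1 a2 = 0 := by
      linear_combination ε * m3 - ((c0 + c2 + c3 * a1) * a2 +
        (c2 + c3 * phiM ε sq a1 a2) * phiP ε sq a1 a2 +
        (-c2 + c3 * (ε * phiP ε sq a1 a2)) * phiM ε sq a1 a2 +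
        (c1 + c2 + c3 * (ε * a2)) * a1) * hεε - a2 * hC1 - a1 * hC4
    have hu3m : (-c2 + c3 * (ε * phiP ε sq a1 a2)) *
        (ε * phiP ε sq a1 a2 + phiM ε sq a1 a2) = 0 := by
      linear_combination hA + phiP ε sq a1 a2 * hu23
    have hu3 : -c2 + c3 * (ε * phiP ε sq a1 a2) = 0 := by
      rcases mul_eq_zero.mp hu3m with h | h
      · exact h
      · exact absurd h hK
    have hu2 : c2 + c3 * phiM ε sq a1 a2 = 0 := by linear_combination ε * hu3 - hu23
    rw [hxc, hC1, hu2, hu3, hC4]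
    simp
  have hcr1 : CR1 ε r d (eV r d r) (fV r d r) φ2 φ3 = a1 := by
    rw [CR1, CR0, oFE, o23, oF3, o2E, hεε, one_div, inv_inv]
    linear_combination a1 * hεε
  have hcr2 : CR2 ε r d (eV r d r) (fV r d r) φ2 φ3 = a2 := by
    rw [CR2, CR0, o2F, oE3, o23, oEF]
    rw [div_eq_iff (by simpa using hε0)]
    ring
  exact ⟨⟨h2ne, o22⟩, ⟨h3ne, o33⟩, oEF, oE2, oE3, oF2, oF3, o23,
    ⟨hconf, hli, hnd⟩, hcr1, hcr2⟩
end DCM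
end
end
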